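/- arXiv:2111.11694 — 6 statements merged into one kernel-verified Lean document; each statement's English description precedes it below -/
import Mathlib

section
/- For all real numbers u and t with 0 < t < u, writing τ = log(u/t), one has ∫₀ᵗ (log(u/ε))^{1/2} dε ≤ (t/(2·τ^{1/2}))·(1 + 2τ). -/
/-- For `0 < t < u`, with `τ = log (u/t)`,
`∫₀ᵗ √(log (u/ε)) dε ≤ (t / (2 √τ)) (1 + 2 τ)`. -/
theorem statement7 (u t : ℝ) (ht : 0 < t) (htu : t < u) :
    (∫ ε in Set.Ioo (0 : ℝ) t, Real.sqrt (Real.log (u / ε))) ≤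
      t / (2 * Real.sqrt (Real.log (u / t))) * (1 + 2 * Real.log (u / t)) := by
  have hu : 0 < u := ht.trans htu
  set τ := Real.log (u / t) with hτdef
  have hτ : 0 < τ := Real.log_pos ((one_lt_div ht).2 htu)
  have hsτ : 0 < Real.sqrt τ := Real.sqrt_pos.2 hτ
  -- the dominating function
  set g : ℝ → ℝ := fun ε => (Real.log u - Real.log ε + τ) / (2 * Real.sqrt τ) with hgdef
  -- nonnegativity of the pre-divided dominating function on Ioo
  have hnn : ∀ x ∈ Set.Ioo (0 : ℝ) t, 0 ≤ Real.log u - Real.log x + τ := by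
    intro x hx
    have h1 : Real.log x ≤ Real.log t := Real.log_le_log hx.1 hx.2.le
    have h2 : Real.log t < Real.log u := Real.log_lt_log ht htu
    linarith
  -- interval integrability of the pre-divided dominating function
  have hii : IntervalIntegrable (fun ε => Real.log u - Real.log ε + τ) MeasureTheory.volume 0 t := by
    apply intervalIntegral.intervalIntegrable_deriv_of_nonneg
      (g := fun ε => ε * Real.log u - ε * Real.log ε + ε + τ * ε)
    · exact (((continuous_id.mul continuous_const).sub Real.continuous_mul_log).add
        continuous_id).add (continuous_const.mul continuous_id) |>.continuousOn
    · intro x hx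
      rw [min_eq_left ht.le, max_eq_right ht.le] at hx
      have hx0 : x ≠ 0 := hx.1.ne'
      have hd := ((((hasDerivAt_id x).mul_const (Real.log u)).sub
          (Real.hasDerivAt_mul_log hx0)).add (hasDerivAt_id x)).add
          ((hasDerivAt_id x).const_mul τ)
      exact hd.congr_deriv (by ring)
    · intro x hx
      rw [min_eq_left ht.le, max_eq_right ht.le] at hx
      exact hnn x hx
  -- value of the integral of the pre-divided dominating function
  have hval : (∫ ε in Set.Ioo (0 : ℝ) t, (Real.log u - Real.log ε + τ)) = t * (1 + 2 * τ) := by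
    have h1 : (∫ ε in Set.Ioo (0 : ℝ) t, (Real.log u - Real.log ε + τ)) =
        ∫ ε in (0 : ℝ)..t, (Real.log u - Real.log ε + τ) := by
      rw [intervalIntegral.integral_of_le ht.le, MeasureTheory.integral_Ioc_eq_integral_Ioo]
    rw [h1]
    have h2 : (∫ ε in (0 : ℝ)..t, (Real.log u - Real.log ε + τ)) =
        (t * Real.log u - t * Real.log t + t + τ * t) -
        (0 * Real.log u - 0 * Real.log 0 + 0 + τ * 0) := by
      apply intervalIntegral.integral_eq_sub_of_hasDeriv_right_of_le ht.le
      · exact (((continuous_id.mul continuous_const).sub Real.continuous_mul_log).add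
          continuous_id).add (continuous_const.mul continuous_id) |>.continuousOn
      · intro x hx
        have hx0 : x ≠ 0 := hx.1.ne'
        have hd : HasDerivAt (fun ε : ℝ => ε * Real.log u - ε * Real.log ε + ε + τ * ε)
            (Real.log u - Real.log x + τ) x := by
          have := ((((hasDerivAt_id x).mul_const (Real.log u)).sub
            (Real.hasDerivAt_mul_log hx0)).add (hasDerivAt_id x)).add
            ((hasDerivAt_id x).const_mul τ)
          exact this.congr_deriv (by ring)
        exact hd.hasDerivWithinAt
      · exact hii
    rw [h2]
    have hlog : τ = Real.log u - Real.log t := Real.log_div hu.ne' ht.ne'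
    simp only [Real.log_zero, mul_zero, zero_mul, sub_zero, add_zero, zero_add]
    nlinarith [hlog]
  -- integrability of g on Ioo
  have hgint : MeasureTheory.IntegrableOn (fun ε => Real.log u - Real.log ε + τ)
      (Set.Ioo (0 : ℝ) t) := by
    have := (intervalIntegrable_iff_integrableOn_Ioo_of_le ht.le).1 hii
    exact this
  have hgint' : MeasureTheory.IntegrableOn g (Set.Ioo (0 : ℝ) t) := hgint.div_const _
  -- pointwise bound on Ioo
  have hle : ∀ x ∈ Set.Ioo (0 : ℝ) t, Real.sqrt (Real.log (u / x)) ≤ g x := by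
    intro x hx
    have hx0 : 0 < x := hx.1
    have hxlt : x < u := hx.2.trans htu
    have hlog : Real.log (u / x) = Real.log u - Real.log x := Real.log_div hu.ne' hx0.ne'
    set y := Real.log (u / x) with hy
    have hy0 : 0 ≤ y := Real.log_nonneg ((one_le_div hx0).2 hxlt.le)
    have key : Real.sqrt y * Real.sqrt τ ≤ (y + τ) / 2 := by
      nlinarith [sq_nonneg (Real.sqrt y - Real.sqrt τ), Real.sq_sqrt hy0, Real.sq_sqrt hτ.le]
    have : Real.sqrt y ≤ (y + τ) / (2 * Real.sqrt τ) := by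
      rw [le_div_iff₀ (by positivity)]
      nlinarith
    rw [hgdef]
    simp only
    rw [← hlog]
    exact this
  -- integrability of the integrand
  have hfint : MeasureTheory.IntegrableOn (fun ε => Real.sqrt (Real.log (u / ε)))
      (Set.Ioo (0 : ℝ) t) := by
    apply hgint'.integrable.mono
    · exact ((Real.measurable_log.comp (measurable_const.div measurable_id)).sqrt
        ).aestronglyMeasurable.restrict
    · refine (MeasureTheory.ae_restrict_iff' measurableSet_Ioo).2 (Filter.Eventually.of_forall ?_)
      intro x hx
      have h1 := hle x hx
      have h2 : 0 ≤ g x := (Real.sqrt_nonneg _).trans h1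
      rw [Real.norm_eq_abs, Real.norm_eq_abs, abs_of_nonneg (Real.sqrt_nonneg _),
        abs_of_nonneg h2]
      exact h1
  -- put it together
  calc (∫ ε in Set.Ioo (0 : ℝ) t, Real.sqrt (Real.log (u / ε)))
      ≤ ∫ ε in Set.Ioo (0 : ℝ) t, g ε :=
        MeasureTheory.setIntegral_mono_on hfint hgint' measurableSet_Ioo hle
    _ = (∫ ε in Set.Ioo (0 : ℝ) t, (Real.log u - Real.log ε + τ)) / (2 * Real.sqrt τ) := by
        rw [hgdef]; exact MeasureTheory.integral_div _ _
    _ = t * (1 + 2 * τ) / (2 * Real.sqrt τ) := by rw [hval]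
    _ = t / (2 * Real.sqrt τ) * (1 + 2 * τ) := by ring
end

section
/- For every real k > 0 there exists a constant C_k > 0 depending only on k such that for all real numbers u and t with 0 < t < u, writing τ = log(u/t), one has ∫₀ᵗ (u/ε)^{1/4}·(log(u/ε))^k dε ≤ C_k·u^{1/4}·t^{3/4}·(1 + τ^k). -/
open MeasureTheory Real Set

private lemma aux_add_rpow {a b k : ℝ} (ha : 0 ≤ a) (hb : 0 ≤ b) (hk : 0 ≤ k) :
    (a + b) ^ k ≤ 2 ^ k * (a ^ k + b ^ k) := by
  have h2 : (0:ℝ) ≤ 2 ^ k := Real.rpow_nonneg (by norm_num) k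
  rcases le_total a b with h | h
  · calc (a + b) ^ k ≤ (2 * b) ^ k :=
          Real.rpow_le_rpow (by linarith) (by linarith) hk
    _ = 2 ^ k * b ^ k := Real.mul_rpow (by norm_num) hb
    _ ≤ 2 ^ k * (a ^ k + b ^ k) := by
          have := Real.rpow_nonneg ha k; nlinarith
  · calc (a + b) ^ k ≤ (2 * a) ^ k :=
          Real.rpow_le_rpow (by linarith) (by linarith) hk
    _ = 2 ^ k * a ^ k := Real.mul_rpow (by norm_num) ha
    _ ≤ 2 ^ k * (a ^ k + b ^ k) := by
          have := Real.rpow_nonneg hb k; nlinarith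

private lemma aux_log_le {k y : ℝ} (hk : 0 < k) (hy : 0 < y) :
    Real.log y ≤ 4 * k * y ^ (1 / (4 * k)) := by
  have h1 : Real.log (y ^ (1 / (4 * k))) = (1 / (4 * k)) * Real.log y :=
    Real.log_rpow hy _
  have h2 : Real.log (y ^ (1 / (4 * k))) ≤ y ^ (1 / (4 * k)) :=
    Real.log_le_self (Real.rpow_nonneg hy.le _)
  have hk4 : (0:ℝ) < 4 * k := by linarith
  calc Real.log y = 4 * k * ((1 / (4 * k)) * Real.log y) := by
        field_simp
  _ = 4 * k * Real.log (y ^ (1 / (4 * k))) := by rw [h1]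
  _ ≤ 4 * k * y ^ (1 / (4 * k)) := by nlinarith

private lemma aux_integral_rpow {t r : ℝ} (ht : 0 < t) (hr : -1 < r) :
    ∫ ε in Set.Ioo (0 : ℝ) t, ε ^ r = t ^ (r + 1) / (r + 1) := by
  rw [← integral_Ioc_eq_integral_Ioo, ← intervalIntegral.integral_of_le ht.le,
    integral_rpow (Or.inl hr), Real.zero_rpow (by linarith)]
  ring

private lemma aux_integrable {t r : ℝ} (ht : 0 < t) (hr : -1 < r) :
    IntegrableOn (fun ε : ℝ => ε ^ r) (Set.Ioo (0 : ℝ) t) := by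
  rw [← intervalIntegrable_iff_integrableOn_Ioo_of_le ht.le]
  exact intervalIntegral.intervalIntegrable_rpow' hr

/-- For every `k > 0` there is a constant `C_k > 0` such that for all
`0 < t < u`, with `τ = log (u/t)`,
`∫₀ᵗ (u/ε)^{1/4} (log (u/ε))^k dε ≤ C_k u^{1/4} t^{3/4} (1 + τ^k)`. -/
theorem statement8 (k : ℝ) (hk : 0 < k) :
    ∃ C : ℝ, 0 < C ∧
      ∀ u t : ℝ, 0 < t → t < u →
        (∫ ε in Set.Ioo (0 : ℝ) t, (u / ε) ^ ((1 : ℝ) / 4) * Real.log (u / ε) ^ k) ≤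
          C * u ^ ((1 : ℝ) / 4) * t ^ ((3 : ℝ) / 4) * (1 + Real.log (u / t) ^ k) := by
  set c : ℝ := (4 * k) ^ k with hc
  have hc0 : 0 ≤ c := Real.rpow_nonneg (by linarith) k
  have h2k : (0:ℝ) < 2 ^ k := Real.rpow_pos_of_pos (by norm_num) k
  refine ⟨2 ^ k * (4 / 3 + 2 * c), by positivity, fun u t ht htu => ?_⟩
  have hu : 0 < u := ht.trans htu
  set τ : ℝ := Real.log (u / t) with hτdef
  have hτ : 0 < τ := Real.log_pos ((one_lt_div ht).2 htu)
  set A₁ : ℝ := 2 ^ k * u ^ ((1:ℝ)/4) * τ ^ k with hA₁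
  set A₂ : ℝ := 2 ^ k * u ^ ((1:ℝ)/4) * c * t ^ ((1:ℝ)/4) with hA₂
  have hA₁0 : 0 ≤ A₁ := by positivity
  have hA₂0 : 0 ≤ A₂ := by positivity
  set g : ℝ → ℝ := fun ε => A₁ * ε ^ (-(1/4) : ℝ) + A₂ * ε ^ (-(1/2) : ℝ) with hg
  have hi1 : IntegrableOn (fun ε : ℝ => ε ^ (-(1/4) : ℝ)) (Set.Ioo (0:ℝ) t) :=
    aux_integrable ht (by norm_num)
  have hi2 : IntegrableOn (fun ε : ℝ => ε ^ (-(1/2) : ℝ)) (Set.Ioo (0:ℝ) t) :=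
    aux_integrable ht (by norm_num)
  have hgint : IntegrableOn g (Set.Ioo (0:ℝ) t) := (hi1.const_mul A₁).add (hi2.const_mul A₂)
  -- pointwise bound
  have hpt : ∀ ε ∈ Set.Ioo (0:ℝ) t,
      (u / ε) ^ ((1 : ℝ) / 4) * Real.log (u / ε) ^ k ≤ g ε := by
    intro ε hε
    obtain ⟨hε0, hεt⟩ := hε
    have hεu : ε < u := hεt.trans htu
    have hlog : Real.log (u / ε) = τ + Real.log (t / ε) := by
      rw [hτdef, Real.log_div (ne_of_gt hu) (ne_of_gt hε0),
        Real.log_div (ne_of_gt ht) (ne_of_gt hε0),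
        Real.log_div (ne_of_gt hu) (ne_of_gt ht)]
      ring
    have hb0 : 0 ≤ Real.log (t / ε) := Real.log_nonneg ((one_le_div hε0).2 hεt.le)
    have hbd : Real.log (t / ε) ^ k ≤ c * (t / ε) ^ ((1:ℝ)/4) := by
      have h1 : Real.log (t / ε) ≤ 4 * k * (t / ε) ^ (1 / (4 * k)) :=
        aux_log_le hk (by positivity)
      have h2 : Real.log (t / ε) ^ k ≤ (4 * k * (t / ε) ^ (1 / (4 * k))) ^ k :=
        Real.rpow_le_rpow hb0 h1 hk.le
      have h3 : (4 * k * (t / ε) ^ (1 / (4 * k))) ^ k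
          = c * ((t / ε) ^ (1 / (4 * k))) ^ k := by
        rw [Real.mul_rpow (by linarith) (Real.rpow_nonneg (by positivity) _)]
      have h4 : ((t / ε) ^ (1 / (4 * k))) ^ k = (t / ε) ^ ((1:ℝ)/4) := by
        rw [← Real.rpow_mul (by positivity)]
        congr 1
        field_simp
      calc Real.log (t / ε) ^ k ≤ (4 * k * (t / ε) ^ (1 / (4 * k))) ^ k := h2
        _ = c * (t / ε) ^ ((1:ℝ)/4) := by rw [h3, h4]
    have hsum : Real.log (u / ε) ^ k ≤ 2 ^ k * (τ ^ k + Real.log (t / ε) ^ k) := by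
      rw [hlog]; exact aux_add_rpow hτ.le hb0 hk.le
    have huε : (u / ε) ^ ((1:ℝ)/4) = u ^ ((1:ℝ)/4) * ε ^ (-(1/4) : ℝ) := by
      rw [Real.div_rpow hu.le hε0.le, Real.rpow_neg hε0.le, div_eq_mul_inv]
    have htε : (t / ε) ^ ((1:ℝ)/4) = t ^ ((1:ℝ)/4) * ε ^ (-(1/4) : ℝ) := by
      rw [Real.div_rpow ht.le hε0.le, Real.rpow_neg hε0.le, div_eq_mul_inv]
    have hεε : ε ^ (-(1/4) : ℝ) * ε ^ (-(1/4) : ℝ) = ε ^ (-(1/2) : ℝ) := by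
      rw [← Real.rpow_add hε0]; norm_num
    have huε0 : 0 ≤ (u / ε) ^ ((1:ℝ)/4) := Real.rpow_nonneg (by positivity) _
    calc (u / ε) ^ ((1 : ℝ) / 4) * Real.log (u / ε) ^ k
        ≤ (u / ε) ^ ((1 : ℝ) / 4) * (2 ^ k * (τ ^ k + Real.log (t / ε) ^ k)) :=
          mul_le_mul_of_nonneg_left hsum huε0
      _ ≤ (u / ε) ^ ((1 : ℝ) / 4) * (2 ^ k * (τ ^ k + c * (t / ε) ^ ((1:ℝ)/4))) := by
          apply mul_le_mul_of_nonneg_left _ huε0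
          apply mul_le_mul_of_nonneg_left _ h2k.le
          linarith
      _ = g ε := by
          rw [hg, hA₁, hA₂, huε, htε]
          simp only []
          rw [← hεε]
          ring
  -- integrate
  have hmono : (∫ ε in Set.Ioo (0 : ℝ) t, (u / ε) ^ ((1 : ℝ) / 4) * Real.log (u / ε) ^ k)
      ≤ ∫ ε in Set.Ioo (0 : ℝ) t, g ε := by
    apply integral_mono_of_nonneg
    · filter_upwards [ae_restrict_mem measurableSet_Ioo] with ε hε
      have hε0 : 0 < ε := hε.1
      have h1 : (0:ℝ) < u / ε := by positivity
      have h2 : 1 < u / ε := (one_lt_div hε0).2 (hε.2.trans htu)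
      exact mul_nonneg (Real.rpow_nonneg h1.le _)
        (Real.rpow_nonneg (Real.log_nonneg h2.le) _)
    · exact hgint
    · filter_upwards [ae_restrict_mem measurableSet_Ioo] with ε hε
      exact hpt ε hε
  have hgval : (∫ ε in Set.Ioo (0 : ℝ) t, g ε)
      = A₁ * (t ^ ((3:ℝ)/4) / (3/4)) + A₂ * (t ^ ((1:ℝ)/2) / (1/2)) := by
    rw [hg, integral_add (hi1.const_mul A₁) (hi2.const_mul A₂),
      integral_const_mul, integral_const_mul,
      aux_integral_rpow ht (by norm_num : (-1:ℝ) < -(1/4)),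
      aux_integral_rpow ht (by norm_num : (-1:ℝ) < -(1/2))]
    norm_num
  have htt : t ^ ((1:ℝ)/4) * t ^ ((1:ℝ)/2) = t ^ ((3:ℝ)/4) := by
    rw [← Real.rpow_add ht]; norm_num
  have hτk : 0 ≤ τ ^ k := Real.rpow_nonneg hτ.le k
  have hu4 : 0 ≤ u ^ ((1:ℝ)/4) := Real.rpow_nonneg hu.le _
  have ht34 : 0 ≤ t ^ ((3:ℝ)/4) := Real.rpow_nonneg ht.le _
  calc (∫ ε in Set.Ioo (0 : ℝ) t, (u / ε) ^ ((1 : ℝ) / 4) * Real.log (u / ε) ^ k)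
      ≤ A₁ * (t ^ ((3:ℝ)/4) / (3/4)) + A₂ * (t ^ ((1:ℝ)/2) / (1/2)) := by
        rw [← hgval]; exact hmono
    _ = 2 ^ k * u ^ ((1:ℝ)/4) * t ^ ((3:ℝ)/4) * ((4/3) * τ ^ k + 2 * c) := by
        rw [hA₁, hA₂, ← htt]; ring
    _ ≤ 2 ^ k * (4 / 3 + 2 * c) * u ^ ((1:ℝ)/4) * t ^ ((3:ℝ)/4) * (1 + τ ^ k) := by
        have key : (4/3) * τ ^ k + 2 * c ≤ (4 / 3 + 2 * c) * (1 + τ ^ k) := by nlinarith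
        have h0 : 0 ≤ 2 ^ k * (u ^ ((1:ℝ)/4) * t ^ ((3:ℝ)/4)) := by positivity
        nlinarith [mul_le_mul_of_nonneg_left key h0]
end

section
/- Let d ≥ 1, let x^(1),…,x^(n) ∈ [0,1]^d be design points, and let (a₀, {ν_S}) be a MARS representation. Then there exists a MARS representation (a₀, {μ_S}) with the same constant a₀, in which for every nonempty S ⊆ {1,…,d} the signed measure μ_S is concentrated on the finite set (∏_{k∈S} U_k) ∩ ∏_{j∈S}[0,1), such that f_{a₀,{μ_S}}(x^(i)) = f_{a₀,{ν_S}}(x^(i)) for every i ∈ {1,…,n}, and V({μ_S}) ≤ V({ν_S}). -/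
open Finset MeasureTheory
open scoped ENNReal
open scoped NNReal

/-- A MARS representation: a constant `a0` together with, for each (nonempty) subset `S`
of coordinates, a finite signed Borel measure on `ℝ^S` concentrated on `Π_{j∈S} [0,1)`. -/
structure MarsRep (d : ℕ) where
  a0 : ℝ
  ν : ∀ S : Finset (Fin d), SignedMeasure ({j // j ∈ S} → ℝ)
  conc : ∀ S : Finset (Fin d),
    (ν S).totalVariation {t : {j // j ∈ S} → ℝ | ∀ j, 0 ≤ t j ∧ t j < 1}ᶜ = 0

/-- Integration of a real function against a finite signed measure. -/
noncomputable def sIntegral {α : Type*} [MeasurableSpace α]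
    (ν : SignedMeasure α) (f : α → ℝ) : ℝ :=
  (∫ t, f t ∂ν.toJordanDecomposition.posPart) -
    (∫ t, f t ∂ν.toJordanDecomposition.negPart)

/-- The function `f_{a₀,{ν_S}}` associated with a MARS representation. -/
noncomputable def marsFun {d : ℕ} (R : MarsRep d) (x : Fin d → ℝ) : ℝ :=
  R.a0 + ∑ S : Finset (Fin d),
    if S.Nonempty then
      sIntegral (R.ν S) fun t => ∏ j : {j // j ∈ S}, max (x j.1 - t j) 0
    else 0

/-- The variation `V({ν_S}) = Σ_{∅ ≠ S} |ν_S|(Π_{j∈S}[0,1) \ {0})` of a MARS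
representation. -/
noncomputable def marsVar {d : ℕ} (R : MarsRep d) : ℝ≥0∞ :=
  ∑ S : Finset (Fin d),
    if S.Nonempty then
      (R.ν S).totalVariation
        ({t : {j // j ∈ S} → ℝ | ∀ j, 0 ≤ t j ∧ t j < 1} \ {fun _ => 0})
    else 0

namespace MarsAux


variable (U : Finset ℝ)

noncomputable def lo (t : ℝ) : ℝ := sSup {u : ℝ | u ∈ U ∧ u ≤ t}

noncomputable def hi (t : ℝ) : ℝ := sInf ({u : ℝ | u ∈ U ∧ t < u} ∪ {2})

noncomputable def hat (u t : ℝ) : ℝ :=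
  if t ∈ Set.Ico (0:ℝ) 1 then
    (if lo U t = u then (hi U t - t) / (hi U t - lo U t) else 0) +
    (if hi U t = u then (t - lo U t) / (hi U t - lo U t) else 0)
  else 0

variable {U}
variable (h0 : (0:ℝ) ∈ U) (h1 : (1:ℝ) ∈ U)

include h0 in
lemma lo_mem {t : ℝ} (ht : t ∈ Set.Ico (0:ℝ) 1) : lo U t ∈ U ∧ lo U t ≤ t := by
  have hne : {u : ℝ | u ∈ U ∧ u ≤ t}.Nonempty := ⟨0, h0, ht.1⟩
  have hfin : {u : ℝ | u ∈ U ∧ u ≤ t}.Finite :=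
    U.finite_toSet.subset (fun u hu => hu.1)
  have := hne.csSup_mem hfin
  exact ⟨this.1, this.2⟩

lemma le_lo {u t : ℝ} (hu : u ∈ U) (hut : u ≤ t) : u ≤ lo U t :=
  le_csSup (Set.Finite.bddAbove (U.finite_toSet.subset (fun v hv => hv.1))) ⟨hu, hut⟩

include h1 in
lemma hi_mem {t : ℝ} (ht : t ∈ Set.Ico (0:ℝ) 1) : hi U t ∈ U ∧ t < hi U t := by
  have hfin : ({u : ℝ | u ∈ U ∧ t < u} ∪ {2}).Finite :=
    ((U.finite_toSet.subset (fun u hu => hu.1)).union (Set.finite_singleton 2))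
  have hne : ({u : ℝ | u ∈ U ∧ t < u} ∪ {2}).Nonempty := ⟨2, Or.inr rfl⟩
  have hmem := hne.csInf_mem hfin
  have hle : hi U t ≤ 1 := csInf_le hfin.bddBelow (Or.inl ⟨h1, ht.2⟩)
  rcases hmem with h | h
  · exact ⟨h.1, h.2⟩
  · simp only [Set.mem_singleton_iff] at h
    rw [hi] at hle
    rw [h] at hle; norm_num at hle

lemma hi_le {u t : ℝ} (hu : u ∈ U) (htu : t < u) : hi U t ≤ u := by
  have hfin : ({u : ℝ | u ∈ U ∧ t < u} ∪ {2}).Finite :=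
    ((U.finite_toSet.subset (fun u hu => hu.1)).union (Set.finite_singleton 2))
  exact csInf_le hfin.bddBelow (Or.inl ⟨hu, htu⟩)

include h0 h1 in
lemma lo_lt_hi {t : ℝ} (ht : t ∈ Set.Ico (0:ℝ) 1) : lo U t < hi U t :=
  lt_of_le_of_lt (lo_mem h0 ht).2 (hi_mem h1 ht).2

include h0 in
lemma lo_zero : lo U 0 = 0 := by
  have h : (0:ℝ) ∈ Set.Ico (0:ℝ) 1 := by norm_num
  exact le_antisymm (lo_mem h0 h).2 (le_lo h0 le_rfl)

variable (hsub : ∀ u ∈ U, 0 ≤ u ∧ u ≤ 1)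

include hsub in
lemma monotone_lo : Monotone (lo U) := by
  intro t t' htt'
  rcases Set.eq_empty_or_nonempty {u : ℝ | u ∈ U ∧ u ≤ t} with h | h
  · rw [lo, h, Real.sSup_empty]
    rcases Set.eq_empty_or_nonempty {u : ℝ | u ∈ U ∧ u ≤ t'} with h' | h'
    · rw [lo, h', Real.sSup_empty]
    · obtain ⟨u, hu⟩ := h'
      exact le_trans (hsub u hu.1).1 (le_lo hu.1 hu.2)
  · exact csSup_le_csSup (Set.Finite.bddAbove (U.finite_toSet.subset (fun u hu => hu.1)))
      h (fun u hu => ⟨hu.1, hu.2.trans htt'⟩)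

lemma monotone_hi : Monotone (hi U) := by
  intro t t' htt'
  have hfin : ({u : ℝ | u ∈ U ∧ t < u} ∪ {2}).Finite :=
    ((U.finite_toSet.subset (fun u hu => hu.1)).union (Set.finite_singleton 2))
  exact csInf_le_csInf hfin.bddBelow ⟨2, Or.inr rfl⟩
    (fun u hu => hu.imp (fun h => ⟨h.1, lt_of_le_of_lt htt' h.2⟩) id)

include hsub in
lemma measurable_hat (u : ℝ) : Measurable (hat U u) := by
  have hlo : Measurable (lo U) := (monotone_lo hsub).measurable
  have hhi : Measurable (hi U) := (monotone_hi (U := U)).measurable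
  unfold hat
  refine Measurable.ite measurableSet_Ico (Measurable.add ?_ ?_) measurable_const
  · exact Measurable.ite (hlo (MeasurableSet.singleton u))
      (((hhi.sub measurable_id).div (hhi.sub hlo))) measurable_const
  · exact Measurable.ite (hhi (MeasurableSet.singleton u))
      (((measurable_id.sub hlo).div (hhi.sub hlo))) measurable_const


lemma hat_out {u t : ℝ} (ht : t ∉ Set.Ico (0:ℝ) 1) : hat U u t = 0 := by
  simp [hat, ht]

include h0 h1 in
lemma hat_nonneg (u t : ℝ) : 0 ≤ hat U u t := by
  rw [hat]
  by_cases ht : t ∈ Set.Ico (0:ℝ) 1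
  · rw [if_pos ht]
    have hD : 0 < hi U t - lo U t := sub_pos.2 (lo_lt_hi h0 h1 ht)
    have h1' : 0 ≤ hi U t - t := sub_nonneg.2 (hi_mem h1 ht).2.le
    have h2' : 0 ≤ t - lo U t := sub_nonneg.2 (lo_mem h0 ht).2
    have e1 : 0 ≤ (hi U t - t) / (hi U t - lo U t) := div_nonneg h1' hD.le
    have e2 : 0 ≤ (t - lo U t) / (hi U t - lo U t) := div_nonneg h2' hD.le
    refine add_nonneg ?_ ?_ <;> split_ifs <;> simp [e1, e2]
  · rw [if_neg ht]

include h0 h1 in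
lemma hat_sum {t : ℝ} (ht : t ∈ Set.Ico (0:ℝ) 1) : ∑ u ∈ U, hat U u t = 1 := by
  have hD : hi U t - lo U t ≠ 0 := (sub_pos.2 (lo_lt_hi h0 h1 ht)).ne'
  simp only [hat, if_pos ht]
  rw [Finset.sum_add_distrib]
  rw [Finset.sum_ite_eq U (lo U t) (fun _ => (hi U t - t) / (hi U t - lo U t)),
      Finset.sum_ite_eq U (hi U t) (fun _ => (t - lo U t) / (hi U t - lo U t))]
  rw [if_pos (lo_mem h0 ht).1, if_pos (hi_mem h1 ht).1]
  field_simp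
  ring

include h0 h1 in
lemma hat_le_one {u : ℝ} (hu : u ∈ U) (t : ℝ) : hat U u t ≤ 1 := by
  by_cases ht : t ∈ Set.Ico (0:ℝ) 1
  · calc hat U u t ≤ ∑ v ∈ U, hat U v t :=
        Finset.single_le_sum (fun v _ => hat_nonneg h0 h1 v t) hu
    _ = 1 := hat_sum h0 h1 ht
  · rw [hat_out ht]; norm_num

include h0 h1 in
lemma hat_interp {x t : ℝ} (hxU : x ∈ U) (ht : t ∈ Set.Ico (0:ℝ) 1) :
    max (x - t) 0 = ∑ u ∈ U, hat U u t * max (x - u) 0 := by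
  have hD : hi U t - lo U t ≠ 0 := (sub_pos.2 (lo_lt_hi h0 h1 ht)).ne'
  simp only [hat, if_pos ht, add_mul, ite_mul, zero_mul]
  rw [Finset.sum_add_distrib,
      Finset.sum_ite_eq U (lo U t) (fun u => (hi U t - t) / (hi U t - lo U t) * max (x - u) 0),
      Finset.sum_ite_eq U (hi U t) (fun u => (t - lo U t) / (hi U t - lo U t) * max (x - u) 0),
      if_pos (lo_mem h0 ht).1, if_pos (hi_mem h1 ht).1]
  rcases le_or_gt x t with hxt | htx
  · have hx1 : x ≤ lo U t := le_lo hxU hxt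
    have hx2 : x ≤ hi U t := hx1.trans (lo_lt_hi h0 h1 ht).le
    rw [max_eq_right (sub_nonpos.2 hxt), max_eq_right (sub_nonpos.2 hx1),
        max_eq_right (sub_nonpos.2 hx2)]
    ring
  · have hx2 : hi U t ≤ x := hi_le hxU htx
    have hx1 : lo U t ≤ x := ((lo_mem h0 ht).2.trans htx.le)
    rw [max_eq_left (sub_nonneg.2 htx.le), max_eq_left (sub_nonneg.2 hx1),
        max_eq_left (sub_nonneg.2 hx2)]
    field_simp
    ring

include h0 in
lemma hat_zero {u : ℝ} (hu : u ≠ 0) : hat U u 0 = 0 := by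
  have ht : (0:ℝ) ∈ Set.Ico (0:ℝ) 1 := by norm_num
  rw [hat, if_pos ht, lo_zero h0]
  rw [if_neg (fun h => hu h.symm)]
  simp

variable {ι : Type*} [Fintype ι]

/-- The half-open unit cube. -/
def cube (ι : Type*) : Set (ι → ℝ) := {t : ι → ℝ | ∀ j, 0 ≤ t j ∧ t j < 1}

lemma measurableSet_cube : MeasurableSet (cube ι) := by
  have : cube ι = Set.pi Set.univ (fun _ : ι => Set.Ico (0:ℝ) 1) := by
    ext t; simp [cube, Set.mem_univ_pi, Set.mem_Ico]
  rw [this]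
  exact MeasurableSet.univ_pi fun _ => measurableSet_Ico

/-- Multilinear interpolation weights. -/
noncomputable def W (U : ι → Finset ℝ) (p t : ι → ℝ) : ℝ :=
  ∏ j, hat (U j) (p j) (t j)

variable {U : ι → Finset ℝ}
variable (hU0 : ∀ j, (0:ℝ) ∈ U j) (hU1 : ∀ j, (1:ℝ) ∈ U j)
  (hUsub : ∀ j, ∀ u ∈ U j, 0 ≤ u ∧ u ≤ 1)

include hU0 hU1 in
lemma W_nonneg (p t : ι → ℝ) : 0 ≤ W U p t :=
  Finset.prod_nonneg fun j _ => hat_nonneg (hU0 j) (hU1 j) _ _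

include hU0 hU1 in
lemma W_le_one {p : ι → ℝ} (hp : ∀ j, p j ∈ U j) (t : ι → ℝ) : W U p t ≤ 1 :=
  Finset.prod_le_one (fun j _ => hat_nonneg (hU0 j) (hU1 j) _ _)
    (fun j _ => hat_le_one (hU0 j) (hU1 j) (hp j) _)

lemma W_out {p t : ι → ℝ} (ht : t ∉ cube ι) : W U p t = 0 := by
  simp only [cube, Set.mem_setOf_eq, not_forall] at ht
  obtain ⟨j, hj⟩ := ht
  exact Finset.prod_eq_zero (Finset.mem_univ j) (hat_out (by simpa [Set.mem_Ico] using hj))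

include hU0 in
lemma W_zero {p : ι → ℝ} (hp : p ≠ fun _ => 0) : W U p (fun _ => 0) = 0 := by
  have : ∃ j, p j ≠ 0 := by
    by_contra h
    push_neg at h
    exact hp (funext h)
  obtain ⟨j, hj⟩ := this
  exact Finset.prod_eq_zero (Finset.mem_univ j) (hat_zero (hU0 j) hj)

include hUsub in
lemma measurable_W (p : ι → ℝ) : Measurable (fun t => W U p t) := by
  apply Finset.measurable_prod
  intro j _
  exact (measurable_hat (hUsub j) (p j)).comp (measurable_pi_apply j)

include hU0 hU1 in
lemma W_sum [DecidableEq ι] {t : ι → ℝ} (ht : t ∈ cube ι) :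
    ∑ p ∈ Fintype.piFinset U, W U p t = 1 := by
  classical
  simp only [W]
  have h := Finset.prod_univ_sum U (fun j u => hat (U j) u (t j))
  rw [← h]
  exact Finset.prod_eq_one fun j _ =>
      hat_sum (hU0 j) (hU1 j) (Set.mem_Ico.mpr (ht j))

include hU0 hU1 in
lemma W_interp [DecidableEq ι] {x t : ι → ℝ} (hx : ∀ j, x j ∈ U j) (ht : t ∈ cube ι) :
    ∏ j, max (x j - t j) 0
      = ∑ p ∈ Fintype.piFinset U, W U p t * ∏ j, max (x j - p j) 0 := by
  classical
  have : ∏ j, max (x j - t j) 0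
      = ∏ j, ∑ u ∈ U j, hat (U j) u (t j) * max (x j - u) 0 :=
    Finset.prod_congr rfl fun j _ =>
      hat_interp (hU0 j) (hU1 j) (hx j) (Set.mem_Ico.mpr (ht j))
  rw [this, Finset.prod_univ_sum U (fun j u => hat (U j) u (t j) * max (x j - u) 0)]
  refine Finset.sum_congr rfl fun p _ => ?_
  simp only [W]
  rw [Finset.prod_mul_distrib]


theorem discretize (U : ι → Finset ℝ)
    (hU0 : ∀ j, (0:ℝ) ∈ U j) (hU1 : ∀ j, (1:ℝ) ∈ U j)
    (hUsub : ∀ j, ∀ u ∈ U j, 0 ≤ u ∧ u ≤ 1)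
    (ν : SignedMeasure (ι → ℝ))
    (hconc : ν.totalVariation (cube ι)ᶜ = 0) :
    ∃ μ : SignedMeasure (ι → ℝ),
      μ.totalVariation {t : ι → ℝ | ∀ j, t j ∈ U j ∧ 0 ≤ t j ∧ t j < 1}ᶜ = 0 ∧
      (∀ x : ι → ℝ, (∀ j, x j ∈ U j) → (∀ j, x j ≤ 1) →
        sIntegral μ (fun t => ∏ j, max (x j - t j) 0)
          = sIntegral ν (fun t => ∏ j, max (x j - t j) 0)) ∧
      μ.totalVariation (cube ι \ {fun _ => 0})
        ≤ ν.totalVariation (cube ι \ {fun _ => 0}) := by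
  classical
  set νp := ν.toJordanDecomposition.posPart with hνp
  set νn := ν.toJordanDecomposition.negPart with hνn
  have hcubeM : MeasurableSet (cube ι) := measurableSet_cube
  have hν0 : νp (cube ι)ᶜ = 0 ∧ νn (cube ι)ᶜ = 0 := by
    rw [SignedMeasure.totalVariation, Measure.add_apply] at hconc
    exact add_eq_zero.mp hconc
  set Pall := Fintype.piFinset U with hPall
  set Pgood := Pall.filter (fun p => ∀ j, p j < 1) with hPgood
  -- the coefficients
  set c : (ι → ℝ) → ℝ := fun p => sIntegral ν (fun t => W U p t) with hc
  -- positive and negative parts of the new measure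
  set Pm : Measure (ι → ℝ) := ∑ p ∈ Pgood, Real.toNNReal (c p) • Measure.dirac p with hPm
  set Nm : Measure (ι → ℝ) := ∑ p ∈ Pgood, Real.toNNReal (-(c p)) • Measure.dirac p with hNm
  have hfin : ∀ (g : (ι → ℝ) → ℝ≥0),
      IsFiniteMeasure (∑ p ∈ Pgood, g p • Measure.dirac p : Measure (ι → ℝ)) := by
    intro g
    constructor
    rw [Measure.finset_sum_apply]
    refine ENNReal.sum_lt_top.mpr fun p _ => ?_
    exact measure_lt_top _ _
  haveI hPfin : IsFiniteMeasure Pm := hfin _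
  haveI hNfin : IsFiniteMeasure Nm := hfin _
  -- mutual singularity
  set E : Set (ι → ℝ) := ↑(Pgood.filter fun p => c p < 0) with hE
  have hEm : MeasurableSet E := (Pgood.filter fun p => c p < 0).finite_toSet.measurableSet
  have hPmE : Pm E = 0 := by
    rw [hPm, Measure.finset_sum_apply]
    refine Finset.sum_eq_zero fun p hp => ?_
    rw [Measure.smul_apply]
    rcases lt_or_ge (c p) 0 with h | h
    · rw [Real.toNNReal_of_nonpos h.le]; simp
    · have hpE : p ∉ E := by
        rw [hE]
        simp only [Finset.coe_filter, Set.mem_setOf_eq, not_and]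
        intro _
        exact not_lt.mpr h
      rw [Measure.dirac_apply' _ hEm, Set.indicator_of_notMem hpE]
      simp
  have hNmE : Nm Eᶜ = 0 := by
    rw [hNm, Measure.finset_sum_apply]
    refine Finset.sum_eq_zero fun p hp => ?_
    rw [Measure.smul_apply]
    rcases lt_or_ge (c p) 0 with h | h
    · have hpE : p ∈ E := by
        rw [hE]; simp only [Finset.coe_filter, Set.mem_setOf_eq]
        exact ⟨hp, h⟩
      rw [Measure.dirac_apply' _ hEm.compl, Set.indicator_of_notMem (by simpa using hpE)]
      simp
    · rw [Real.toNNReal_of_nonpos (by linarith)]; simp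
  set jd : JordanDecomposition (ι → ℝ) :=
    { posPart := Pm, negPart := Nm,
      posPart_finite := hPfin, negPart_finite := hNfin,
      mutuallySingular := ⟨E, hEm, hPmE, hNmE⟩ } with hjdd
  set μ : SignedMeasure (ι → ℝ) := jd.toSignedMeasure with hμ
  have hjd : μ.toJordanDecomposition = jd :=
    JordanDecomposition.toJordanDecomposition_toSignedMeasure jd
  have htv : μ.totalVariation = Pm + Nm := by
    rw [SignedMeasure.totalVariation, hjd]
  -- integration against μ
  have hdiracInt : ∀ (f : (ι → ℝ) → ℝ) (p : ι → ℝ) (r : ℝ≥0),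
      Integrable f (r • Measure.dirac p : Measure (ι → ℝ)) := by
    intro f p r
    refine Integrable.smul_measure_nnreal ?_
    have hae : f =ᵐ[Measure.dirac p] fun _ => f p := by
      rw [Filter.EventuallyEq, ae_iff]
      refine measure_mono_null (fun t ht => ?_) (?_ : Measure.dirac p {p}ᶜ = 0)
      · simp only [Set.mem_setOf_eq] at ht
        intro h
        simp only [Set.mem_singleton_iff] at h
        exact ht (by rw [h])
      · rw [Measure.dirac_apply' _ (measurableSet_singleton p).compl,
          Set.indicator_of_notMem (by simp)]
    exact (integrable_const (f p)).congr hae.symm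
  have hint : ∀ f : (ι → ℝ) → ℝ, sIntegral μ f = ∑ p ∈ Pgood, c p * f p := by
    intro f
    have h1 : ∫ t, f t ∂Pm = ∑ p ∈ Pgood, (Real.toNNReal (c p) : ℝ) * f p := by
      rw [hPm, integral_finset_sum_measure (fun p _ => hdiracInt f p _)]
      refine Finset.sum_congr rfl fun p _ => ?_
      rw [integral_smul_nnreal_measure, integral_dirac]
      simp [NNReal.smul_def]
    have h2 : ∫ t, f t ∂Nm = ∑ p ∈ Pgood, (Real.toNNReal (-(c p)) : ℝ) * f p := by
      rw [hNm, integral_finset_sum_measure (fun p _ => hdiracInt f p _)]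
      refine Finset.sum_congr rfl fun p _ => ?_
      rw [integral_smul_nnreal_measure, integral_dirac]
      simp [NNReal.smul_def]
    have : sIntegral μ f = (∫ t, f t ∂Pm) - ∫ t, f t ∂Nm := by
      rw [sIntegral, hjd]
    rw [this, h1, h2, ← Finset.sum_sub_distrib]
    refine Finset.sum_congr rfl fun p _ => ?_
    rw [← sub_mul]
    congr 1
    rw [Real.coe_toNNReal', Real.coe_toNNReal']
    rcases le_total (c p) 0 with h | h
    · rw [max_eq_right h, max_eq_left (by linarith)]; ring
    · rw [max_eq_left h, max_eq_right (by linarith)]; ring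
  -- integrability of the weights
  have hWint : ∀ (p : ι → ℝ) (m : Measure (ι → ℝ)) [IsFiniteMeasure m],
      p ∈ Pall → Integrable (fun t => W U p t) m := by
    intro p m hm hp
    refine Integrable.mono' (integrable_const (1:ℝ))
      (measurable_W hUsub p).aestronglyMeasurable (ae_of_all _ fun t => ?_)
    rw [Real.norm_eq_abs, abs_of_nonneg (W_nonneg hU0 hU1 p t)]
    exact W_le_one hU0 hU1 (fun j => (Fintype.mem_piFinset.mp hp) j) t
  -- a.e. membership in the cube
  have haep : ∀ᵐ t ∂νp, t ∈ cube ι := by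
    rw [ae_iff]
    exact measure_mono_null (fun t ht => ht) hν0.1
  have haen : ∀ᵐ t ∂νn, t ∈ cube ι := by
    rw [ae_iff]
    exact measure_mono_null (fun t ht => ht) hν0.2
  refine ⟨μ, ?_, ?_, ?_⟩
  · -- concentration on the grid
    set G : Set (ι → ℝ) := {t : ι → ℝ | ∀ j, t j ∈ U j ∧ 0 ≤ t j ∧ t j < 1} with hG
    have hsum0 : ∀ (g : (ι → ℝ) → ℝ≥0),
        (∑ p ∈ Pgood, g p • Measure.dirac p : Measure (ι → ℝ)) Gᶜ = 0 := by
      intro g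
      rw [Measure.finset_sum_apply]
      refine Finset.sum_eq_zero fun p hp => ?_
      have hpG : p ∈ G := by
        rw [hPgood, Finset.mem_filter] at hp
        intro j
        have hpj : p j ∈ U j := Fintype.mem_piFinset.mp hp.1 j
        exact ⟨hpj, (hUsub j _ hpj).1, hp.2 j⟩
      rw [Measure.smul_apply]
      have : Measure.dirac p Gᶜ = 0 := by
        refine measure_mono_null (fun t ht => ?_) (?_ : Measure.dirac p {p}ᶜ = 0)
        · intro h
          simp only [Set.mem_singleton_iff] at h
          exact ht (by rw [h]; exact hpG)
        · rw [Measure.dirac_apply' _ (measurableSet_singleton p).compl,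
            Set.indicator_of_notMem (by simp)]
      rw [this]; simp
    rw [htv, Measure.add_apply, hPm, hNm, hsum0, hsum0, add_zero]
  · -- fitted values
    intro x hxU hxI
    rw [hint]
    have hcongrP : (fun t => ∏ j, max (x j - t j) 0)
        =ᵐ[νp] (fun t => ∑ p ∈ Pall, W U p t * ∏ j, max (x j - p j) 0) :=
      haep.mono fun t ht => W_interp hU0 hU1 hxU ht
    have hcongrN : (fun t => ∏ j, max (x j - t j) 0)
        =ᵐ[νn] (fun t => ∑ p ∈ Pall, W U p t * ∏ j, max (x j - p j) 0) :=
      haen.mono fun t ht => W_interp hU0 hU1 hxU ht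
    have hSintP : ∫ t, ∏ j, max (x j - t j) 0 ∂νp
        = ∑ p ∈ Pall, (∫ t, W U p t ∂νp) * ∏ j, max (x j - p j) 0 := by
      rw [integral_congr_ae hcongrP,
        integral_finset_sum _ (fun p hp => ((hWint p νp hp).mul_const _))]
      exact Finset.sum_congr rfl fun p _ => integral_mul_const _ _
    have hSintN : ∫ t, ∏ j, max (x j - t j) 0 ∂νn
        = ∑ p ∈ Pall, (∫ t, W U p t ∂νn) * ∏ j, max (x j - p j) 0 := by
      rw [integral_congr_ae hcongrN,
        integral_finset_sum _ (fun p hp => ((hWint p νn hp).mul_const _))]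
      exact Finset.sum_congr rfl fun p _ => integral_mul_const _ _
    have hνint : sIntegral ν (fun t => ∏ j, max (x j - t j) 0)
        = ∑ p ∈ Pall, c p * ∏ j, max (x j - p j) 0 := by
      rw [sIntegral, ← hνp, ← hνn, hSintP, hSintN, ← Finset.sum_sub_distrib]
      refine Finset.sum_congr rfl fun p _ => ?_
      rw [← sub_mul]
      rfl
    rw [hνint]
    refine Finset.sum_subset (hPgood ▸ Finset.filter_subset _ Pall) fun p hp hnp => ?_
    have : ∃ j, ¬ p j < 1 := by
      by_contra h
      push_neg at h
      exact hnp (Finset.mem_filter.mpr ⟨hp, h⟩)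
    obtain ⟨j, hj⟩ := this
    have hpj : p j = 1 :=
      le_antisymm (hUsub j _ (Fintype.mem_piFinset.mp hp j)).2 (not_lt.mp hj)
    have : ∏ j', max (x j' - p j') 0 = 0 :=
      Finset.prod_eq_zero (Finset.mem_univ j)
        (by rw [hpj, max_eq_right (by linarith [hxI j])])
    rw [this, mul_zero]
  · -- variation bound
    set A : Set (ι → ℝ) := cube ι \ {fun _ => 0} with hA
    have hAm : MeasurableSet A := hcubeM.diff (measurableSet_singleton _)
    set Q := Pgood.filter (fun p => p ≠ fun _ => 0) with hQ
    -- LHS computation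
    have hLHS : μ.totalVariation A = ∑ p ∈ Q, ENNReal.ofReal |c p| := by
      rw [htv, Measure.add_apply, hPm, hNm, Measure.finset_sum_apply, Measure.finset_sum_apply,
        ← Finset.sum_add_distrib]
      have hQs : ∑ p ∈ Q, ENNReal.ofReal |c p|
          = ∑ p ∈ Pgood, if p ≠ (fun _ => 0) then ENNReal.ofReal |c p| else 0 :=
        Finset.sum_filter _ _
      rw [hQs]
      refine Finset.sum_congr rfl fun p hp => ?_
      have hpc : p ∈ cube ι := by
        rw [hPgood, Finset.mem_filter] at hp
        intro j
        exact ⟨(hUsub j _ (Fintype.mem_piFinset.mp hp.1 j)).1, hp.2 j⟩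
      rw [Measure.smul_apply, Measure.smul_apply]
      by_cases h : p = fun _ => 0
      · have : Measure.dirac p A = 0 := by
          rw [Measure.dirac_apply' _ hAm, Set.indicator_of_notMem]
          rw [hA]
          intro hmem
          exact hmem.2 (by rw [h]; rfl)
        rw [this, if_neg (by simp [h])]
        simp
      · have : Measure.dirac p A = 1 := by
          rw [Measure.dirac_apply' _ hAm, Set.indicator_of_mem, Pi.one_apply]
          exact ⟨hpc, by simpa using h⟩
        rw [this, if_pos h, ENNReal.smul_def, ENNReal.smul_def, smul_eq_mul, smul_eq_mul,
          mul_one, mul_one]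
        have hco : ∀ a : ℝ, ((Real.toNNReal a : ℝ≥0) : ℝ≥0∞) = ENNReal.ofReal a :=
          fun a => rfl
        rw [hco, hco]
        rcases le_total (c p) 0 with hc0 | hc0
        · rw [ENNReal.ofReal_of_nonpos hc0, abs_of_nonpos hc0, zero_add]
        · rw [ENNReal.ofReal_of_nonpos (show -c p ≤ 0 by linarith), abs_of_nonneg hc0, add_zero]
    rw [hLHS]
    have hQsub : Q ⊆ Pall :=
      (Finset.filter_subset _ _).trans (hPgood ▸ Finset.filter_subset _ Pall)
    have hgle : ∀ t, (∑ p ∈ Q, W U p t) ≤ A.indicator (fun _ => (1:ℝ)) t := by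
      intro t
      by_cases htc : t ∈ cube ι
      · by_cases ht0 : t = fun _ => 0
        · have hz : (∑ p ∈ Q, W U p t) = 0 := by
            refine Finset.sum_eq_zero fun p hp => ?_
            rw [ht0]
            exact W_zero hU0 ((Finset.mem_filter.mp hp).2)
          rw [hz]
          exact Set.indicator_nonneg (fun _ _ => zero_le_one) t
        · have htA : t ∈ A := ⟨htc, by simpa using ht0⟩
          rw [Set.indicator_of_mem htA]
          calc (∑ p ∈ Q, W U p t) ≤ ∑ p ∈ Pall, W U p t :=
              Finset.sum_le_sum_of_subset_of_nonneg hQsub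
                (fun p _ _ => W_nonneg hU0 hU1 p t)
            _ = 1 := W_sum hU0 hU1 htc
      · have hz : (∑ p ∈ Q, W U p t) = 0 := Finset.sum_eq_zero fun p _ => W_out htc
        rw [hz]
        exact Set.indicator_nonneg (fun _ _ => zero_le_one) t
    have hbound : ∀ (m : Measure (ι → ℝ)) [IsFiniteMeasure m],
        (∑ p ∈ Q, ∫ t, W U p t ∂m) ≤ (m A).toReal := by
      intro m _
      have hip : ∫ t, (∑ p ∈ Q, W U p t) ∂m = ∑ p ∈ Q, ∫ t, W U p t ∂m :=
        integral_finset_sum _ (fun p hp => hWint p m (hQsub hp))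
      rw [← hip]
      calc ∫ t, (∑ p ∈ Q, W U p t) ∂m ≤ ∫ t, A.indicator (fun _ => (1:ℝ)) t ∂m :=
          integral_mono (integrable_finset_sum _ (fun p hp => hWint p m (hQsub hp)))
            ((integrable_const (1:ℝ)).indicator hAm) hgle
        _ = (m A).toReal := by rw [integral_indicator_const _ hAm]; simp; rfl
    have habs : ∀ p ∈ Q, |c p| ≤ (∫ t, W U p t ∂νp) + ∫ t, W U p t ∂νn := by
      intro p _
      have h1 : 0 ≤ ∫ t, W U p t ∂νp := integral_nonneg fun t => W_nonneg hU0 hU1 p t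
      have h2 : 0 ≤ ∫ t, W U p t ∂νn := integral_nonneg fun t => W_nonneg hU0 hU1 p t
      have hcp : c p = (∫ t, W U p t ∂νp) - ∫ t, W U p t ∂νn := rfl
      rw [hcp, abs_le]
      constructor <;> linarith
    have hsumabs : ∑ p ∈ Q, |c p| ≤ (νp A).toReal + (νn A).toReal := by
      calc ∑ p ∈ Q, |c p|
          ≤ ∑ p ∈ Q, ((∫ t, W U p t ∂νp) + ∫ t, W U p t ∂νn) := Finset.sum_le_sum habs
        _ = (∑ p ∈ Q, ∫ t, W U p t ∂νp) + ∑ p ∈ Q, ∫ t, W U p t ∂νn :=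
            Finset.sum_add_distrib
        _ ≤ (νp A).toReal + (νn A).toReal := add_le_add (hbound νp) (hbound νn)
    calc ∑ p ∈ Q, ENNReal.ofReal |c p| = ENNReal.ofReal (∑ p ∈ Q, |c p|) :=
        (ENNReal.ofReal_sum_of_nonneg (fun p _ => abs_nonneg _)).symm
      _ ≤ ENNReal.ofReal ((νp A).toReal + (νn A).toReal) :=
          ENNReal.ofReal_le_ofReal hsumabs
      _ ≤ νp A + νn A := by
          rw [ENNReal.ofReal_add ENNReal.toReal_nonneg ENNReal.toReal_nonneg,
            ENNReal.ofReal_toReal (measure_ne_top _ _),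
            ENNReal.ofReal_toReal (measure_ne_top _ _)]
      _ = ν.totalVariation A := by rw [SignedMeasure.totalVariation, Measure.add_apply]

end MarsAux

/-- Discretization: any MARS representation can be replaced, without
changing the fitted values at the design points and without increasing the variation,
by one whose measures are concentrated on the finite grid
`(Π_{k∈S} U_k) ∩ Π_{j∈S}[0,1)`, where `U_k = {0,1} ∪ {x_k^{(i)}}`. -/
theorem statement9 (d : ℕ) (hd : 1 ≤ d) (nn : ℕ) (x : Fin nn → Fin d → ℝ)
    (hx : ∀ i k, x i k ∈ Set.Icc (0 : ℝ) 1) (R : MarsRep d) :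
    ∃ R' : MarsRep d, R'.a0 = R.a0 ∧
      (∀ S : Finset (Fin d), S.Nonempty →
        (R'.ν S).totalVariation
          {t : {j // j ∈ S} → ℝ | ∀ j : {j // j ∈ S},
            (t j = 0 ∨ t j = 1 ∨ ∃ i, x i j.1 = t j) ∧ 0 ≤ t j ∧ t j < 1}ᶜ = 0) ∧
      (∀ i, marsFun R' (x i) = marsFun R (x i)) ∧
      marsVar R' ≤ marsVar R := by
  classical
  set Uk : Fin d → Finset ℝ :=
    fun k => insert (0:ℝ) (insert 1 (Finset.image (fun i => x i k) Finset.univ)) with hUk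
  have hU0 : ∀ k, (0:ℝ) ∈ Uk k := fun k => Finset.mem_insert_self _ _
  have hU1 : ∀ k, (1:ℝ) ∈ Uk k := fun k =>
    Finset.mem_insert_of_mem (Finset.mem_insert_self _ _)
  have hUsub : ∀ k, ∀ u ∈ Uk k, 0 ≤ u ∧ u ≤ 1 := by
    intro k u hu
    rcases Finset.mem_insert.mp hu with h | h
    · simp [h]
    rcases Finset.mem_insert.mp h with h | h
    · simp [h]
    · obtain ⟨i, _, rfl⟩ := Finset.mem_image.mp h
      exact ⟨(hx i k).1, (hx i k).2⟩
  have key := fun S : Finset (Fin d) =>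
    MarsAux.discretize (fun j : {j // j ∈ S} => Uk j.1)
      (fun j => hU0 _) (fun j => hU1 _) (fun j => hUsub _) (R.ν S) (R.conc S)
  choose μ hμ1 hμ2 hμ3 using key
  refine ⟨⟨R.a0, μ, fun S => measure_mono_null
      (Set.compl_subset_compl.mpr (fun t ht j => ⟨(ht j).2.1, (ht j).2.2⟩)) (hμ1 S)⟩,
    rfl, ?_, ?_, ?_⟩
  · intro S _
    have hset : {t : {j // j ∈ S} → ℝ | ∀ j : {j // j ∈ S},
        (t j = 0 ∨ t j = 1 ∨ ∃ i, x i j.1 = t j) ∧ 0 ≤ t j ∧ t j < 1}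
        = {t : {j // j ∈ S} → ℝ | ∀ j, t j ∈ Uk j.1 ∧ 0 ≤ t j ∧ t j < 1} := by
      ext t
      simp only [Set.mem_setOf_eq, hUk, Finset.mem_insert, Finset.mem_image,
        Finset.mem_univ, true_and]
      all_goals tauto
    rw [hset]
    exact hμ1 S
  · intro i
    rw [marsFun, marsFun]
    refine congrArg (fun z => R.a0 + z) (Finset.sum_congr rfl fun S _ => ?_)
    by_cases hS : S.Nonempty
    · rw [if_pos hS, if_pos hS]
      exact hμ2 S (fun j => x i j.1)
        (fun j => Finset.mem_insert_of_mem (Finset.mem_insert_of_mem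
          (Finset.mem_image.mpr ⟨i, Finset.mem_univ i, rfl⟩)))
        (fun j => (hx i j.1).2)
    · rw [if_neg hS, if_neg hS]
  · rw [marsVar, marsVar]
    refine Finset.sum_le_sum fun S _ => ?_
    by_cases hS : S.Nonempty
    · rw [if_pos hS, if_pos hS]
      exact hμ3 S
    · rw [if_neg hS, if_neg hS]
end

section
/- Let d ≥ 1 and let (a₀, {ν_S}) and (b₀, {μ_S}) be two MARS representations. If f_{a₀,{ν_S}}(x) = f_{b₀,{μ_S}}(x) for every x ∈ [0,1]^d, then a₀ = b₀ and ν_S = μ_S for every nonempty S ⊆ {1,…,d}. -/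
open Finset MeasureTheory
open scoped ENNReal
open Set Filter MeasurableSpace
open scoped Topology

lemma alg_sum {ι : Type*} [DecidableEq ι] (S S' : Finset ι) (u v : ι → ℝ) :
    ∑ T ∈ S.powerset, (-1:ℝ)^(S.card + T.card) * ∏ j ∈ S', (if j ∈ T then u j else v j)
    = if S ⊆ S' then (∏ j ∈ S, (u j - v j)) * ∏ j ∈ S' \ S, v j else 0 := by
  induction S using Finset.induction_on generalizing v with
  | empty => simp
  | @insert a s ha ih =>
    rw [Finset.sum_powerset_insert ha]
    have hps : ∀ T ∈ s.powerset, a ∉ T := fun T hT => fun haT =>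
      ha (Finset.mem_powerset.mp hT haT)
    have hterm1 : ∑ T ∈ s.powerset, (-1:ℝ)^((insert a s).card + T.card) *
        ∏ j ∈ S', (if j ∈ T then u j else v j)
        = -∑ T ∈ s.powerset, (-1:ℝ)^(s.card + T.card) *
            ∏ j ∈ S', (if j ∈ T then u j else v j) := by
      rw [← Finset.sum_neg_distrib]
      refine Finset.sum_congr rfl fun T hT => ?_
      rw [Finset.card_insert_of_notMem ha]
      ring_nf
    have hterm2 : ∑ T ∈ s.powerset, (-1:ℝ)^((insert a s).card + (insert a T).card) *
        ∏ j ∈ S', (if j ∈ insert a T then u j else v j)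
        = ∑ T ∈ s.powerset, (-1:ℝ)^(s.card + T.card) *
            ∏ j ∈ S', (if j ∈ T then u j else (Function.update v a (u a)) j) := by
      refine Finset.sum_congr rfl fun T hT => ?_
      have haT : a ∉ T := hps T hT
      rw [Finset.card_insert_of_notMem ha, Finset.card_insert_of_notMem haT]
      have : ∀ j ∈ S', (if j ∈ insert a T then u j else v j)
          = (if j ∈ T then u j else (Function.update v a (u a)) j) := by
        intro j _
        by_cases hja : j = a
        · subst hja
          simp [haT, Function.update_self]
        · simp [Finset.mem_insert, hja, Function.update_of_ne hja]
      rw [Finset.prod_congr rfl this]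
      ring_nf
    rw [hterm1, hterm2, ih v, ih (Function.update v a (u a))]
    by_cases hs : s ⊆ S'
    · by_cases haS' : a ∈ S'
      · have hins : insert a s ⊆ S' := Finset.insert_subset haS' hs
        rw [if_pos hs, if_pos hs, if_pos hins]
        have haSd : a ∈ S' \ s := Finset.mem_sdiff.mpr ⟨haS', ha⟩
        have hsd : (S' \ s).erase a = S' \ insert a s := by
          ext j
          simp only [Finset.mem_erase, Finset.mem_sdiff, Finset.mem_insert]
          tauto
        have h1 : ∏ j ∈ S' \ s, v j = v a * ∏ j ∈ S' \ insert a s, v j := by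
          rw [← Finset.mul_prod_erase _ _ haSd, hsd]
        have h2 : ∏ j ∈ S' \ s, (Function.update v a (u a)) j
            = u a * ∏ j ∈ S' \ insert a s, v j := by
          rw [← Finset.mul_prod_erase _ _ haSd, hsd, Function.update_self]
          congr 1
          refine Finset.prod_congr rfl fun j hj => ?_
          have : j ≠ a := fun hja => (Finset.mem_sdiff.mp hj).2
            (by rw [hja]; exact Finset.mem_insert_self a s)
          rw [Function.update_of_ne this]
        have h3 : ∏ j ∈ s, (u j - (Function.update v a (u a)) j) = ∏ j ∈ s, (u j - v j) := by
          refine Finset.prod_congr rfl fun j hj => ?_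
          have : j ≠ a := fun hja => ha (hja ▸ hj)
          rw [Function.update_of_ne this]
        rw [h1, h2, h3, Finset.prod_insert ha]
        ring
      · have hins : ¬ insert a s ⊆ S' := fun hc => haS' (hc (Finset.mem_insert_self a s))
        rw [if_pos hs, if_pos hs, if_neg hins]
        have h3 : ∏ j ∈ s, (u j - (Function.update v a (u a)) j) = ∏ j ∈ s, (u j - v j) := by
          refine Finset.prod_congr rfl fun j hj => ?_
          have : j ≠ a := fun hja => ha (hja ▸ hj)
          rw [Function.update_of_ne this]
        have h4 : ∏ j ∈ S' \ s, (Function.update v a (u a)) j = ∏ j ∈ S' \ s, v j := by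
          refine Finset.prod_congr rfl fun j hj => ?_
          have : j ≠ a := fun hja => haS' (hja ▸ (Finset.mem_sdiff.mp hj).1)
          rw [Function.update_of_ne this]
        rw [h3, h4]
        ring
    · have hins : ¬ insert a s ⊆ S' := fun hc => hs ((Finset.subset_insert a s).trans hc)
      rw [if_neg hs, if_neg hs, if_neg hins]
      ring

variable {ι : Type*} [Fintype ι]

lemma measurableSet_lower (x : ι → ℝ) :
    MeasurableSet {t : ι → ℝ | ∀ j, t j ≤ x j} := by
  have : {t : ι → ℝ | ∀ j, t j ≤ x j} = Set.pi Set.univ (fun j => Set.Iic (x j)) := by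
    ext t; simp [Set.mem_pi, Pi.le_def]
  rw [this]
  exact MeasurableSet.univ_pi (fun j => measurableSet_Iic)

lemma hat_mem (a t h : ℝ) (hh : 0 ≤ h) :
    0 ≤ max (a + h - t) 0 - max (a - t) 0 ∧ max (a + h - t) 0 - max (a - t) 0 ≤ h := by
  constructor
  · have : max (a - t) 0 ≤ max (a + h - t) 0 := max_le_max (by linarith) le_rfl
    linarith
  · have h1 : a + h - t ≤ max (a - t) 0 + h := by
      have := le_max_left (a - t) 0; linarith
    have h2 : (0:ℝ) ≤ max (a - t) 0 + h := by
      have := le_max_right (a - t) 0; linarith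
    have := max_le h1 h2
    linarith

lemma continuous_prod_max (y : ι → ℝ) :
    Continuous (fun t : ι → ℝ => ∏ j, max (y j - t j) 0) := by
  exact continuous_finset_prod _ fun j _ =>
    (continuous_const.sub (continuous_apply j)).max continuous_const

lemma integrable_prod_max (μ : Measure (ι → ℝ)) [IsFiniteMeasure μ]
    (hμ : ∀ᵐ t ∂μ, ∀ j, 0 ≤ t j) (y : ι → ℝ) :
    Integrable (fun t => ∏ j, max (y j - t j) 0) μ := by
  refine Integrable.mono' (integrable_const (∏ j, |y j|))
    (continuous_prod_max y).aestronglyMeasurable ?_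
  filter_upwards [hμ] with t ht
  rw [Real.norm_eq_abs, abs_of_nonneg (Finset.prod_nonneg fun j _ => le_max_right _ _)]
  refine Finset.prod_le_prod (fun j _ => le_max_right _ _) fun j _ => ?_
  exact max_le (by have := ht j; have := le_abs_self (y j); linarith) (abs_nonneg _)

lemma tendsto_hat (μ : Measure (ι → ℝ)) [IsFiniteMeasure μ] (x : ι → ℝ) :
    Tendsto (fun h : ℝ => ∫ t, ∏ j, ((max (x j + h - t j) 0 - max (x j - t j) 0) / h) ∂μ)
      (𝓝[>] 0) (𝓝 (μ {t | ∀ j, t j ≤ x j}).toReal) := by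
  have hmeas := measurableSet_lower x
  have hrw : (μ {t | ∀ j, t j ≤ x j}).toReal
      = ∫ t, Set.indicator {t : ι → ℝ | ∀ j, t j ≤ x j} (1 : (ι → ℝ) → ℝ) t ∂μ :=
    (MeasureTheory.integral_indicator_one hmeas).symm
  rw [hrw]
  refine tendsto_integral_filter_of_dominated_convergence (fun _ => (1:ℝ)) ?_ ?_
    (integrable_const 1) ?_
  · refine Eventually.of_forall fun h => Continuous.aestronglyMeasurable ?_
    fun_prop
  · refine eventually_nhdsWithin_of_forall fun h hh => Eventually.of_forall fun t => ?_
    have hh' : (0:ℝ) < h := hh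
    rw [Real.norm_eq_abs]
    have hfac : ∀ j : ι, 0 ≤ (max (x j + h - t j) 0 - max (x j - t j) 0) / h ∧
        (max (x j + h - t j) 0 - max (x j - t j) 0) / h ≤ 1 := by
      intro j
      obtain ⟨h1, h2⟩ := hat_mem (x j) (t j) h hh'.le
      constructor
      · positivity
      · rw [div_le_one hh']; exact h2
    rw [abs_of_nonneg (Finset.prod_nonneg fun j _ => (hfac j).1)]
    calc ∏ j, (max (x j + h - t j) 0 - max (x j - t j) 0) / h
        ≤ ∏ _j : ι, (1:ℝ) := Finset.prod_le_prod (fun j _ => (hfac j).1) (fun j _ => (hfac j).2)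
      _ = 1 := by simp
  · refine Eventually.of_forall fun t => ?_
    have hind : Set.indicator {t : ι → ℝ | ∀ j, t j ≤ x j} (1 : (ι → ℝ) → ℝ) t
        = ∏ j : ι, (if t j ≤ x j then (1:ℝ) else 0) := by
      by_cases htx : ∀ j, t j ≤ x j
      · have hmem : t ∈ {t : ι → ℝ | ∀ j, t j ≤ x j} := htx
        rw [Set.indicator_of_mem hmem, Pi.one_apply,
          Finset.prod_congr rfl fun j _ => if_pos (htx j), Finset.prod_const_one]
      · have hmem : t ∉ {t : ι → ℝ | ∀ j, t j ≤ x j} := htx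
        rw [Set.indicator_of_notMem hmem]
        push_neg at htx
        obtain ⟨j0, hj0⟩ := htx
        exact (Finset.prod_eq_zero (Finset.mem_univ j0)
          (if_neg (not_le.mpr hj0) : (if t j0 ≤ x j0 then (1:ℝ) else 0) = 0)).symm
    rw [hind]
    refine tendsto_finset_prod _ fun j _ => ?_
    by_cases hj : t j ≤ x j
    · rw [if_pos hj]
      refine Tendsto.congr' ?_ tendsto_const_nhds
      refine eventually_nhdsWithin_of_forall fun h hh => ?_
      have hh' : (0:ℝ) < h := hh
      show (1:ℝ) = (max (x j + h - t j) 0 - max (x j - t j) 0) / h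
      rw [max_eq_left (by linarith : (0:ℝ) ≤ x j + h - t j),
        max_eq_left (by linarith : (0:ℝ) ≤ x j - t j)]
      field_simp; ring
    · rw [if_neg hj]
      push_neg at hj
      refine Tendsto.congr' ?_ tendsto_const_nhds
      have hmem : Set.Ioo (0:ℝ) (t j - x j) ∈ 𝓝[>] (0:ℝ) :=
        Ioo_mem_nhdsGT_of_mem ⟨le_rfl, by linarith⟩
      filter_upwards [hmem] with h hh
      obtain ⟨hh1, hh2⟩ := hh
      show (0:ℝ) = (max (x j + h - t j) 0 - max (x j - t j) 0) / h
      rw [max_eq_right (by linarith : x j + h - t j ≤ 0),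
        max_eq_right (by linarith : x j - t j ≤ 0)]
      simp

variable {ι : Type*} [Fintype ι]

lemma measure_ext_lower (P Q : Measure (ι → ℝ)) [IsFiniteMeasure P] [IsFiniteMeasure Q]
    (huniv : P Set.univ = Q Set.univ)
    (hPQ : ∀ x : ι → ℝ, P {t | ∀ j, t j ≤ x j} = Q {t | ∀ j, t j ≤ x j}) : P = Q := by
  have hspan : IsCountablySpanning (Set.range (Set.Iic : ℝ → Set ℝ)) := by
    refine ⟨fun n => Set.Iic (n : ℝ), fun n => Set.mem_range_self _, ?_⟩
    ext y
    simp only [Set.mem_iUnion, Set.mem_Iic, Set.mem_univ, iff_true]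
    exact ⟨⌈y⌉₊, Nat.le_ceil y⟩
  have hgen : (inferInstance : MeasurableSpace (ι → ℝ)) =
      generateFrom (Set.pi Set.univ '' Set.pi Set.univ
        (fun _ : ι => Set.range (Set.Iic : ℝ → Set ℝ))) := by
    refine (generateFrom_eq_pi (fun _ => ?_) (fun _ => hspan)).symm
    rw [← borel_eq_generateFrom_Iic ℝ]
    exact (BorelSpace.measurable_eq).symm
  refine MeasureTheory.ext_of_generate_finite _ hgen
    (IsPiSystem.pi fun _ => ?_) ?_ huniv
  · rintro _ ⟨a, rfl⟩ _ ⟨b, rfl⟩ _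
    exact ⟨min a b, (Set.Iic_inter_Iic).symm⟩
  · rintro s ⟨f, hf, rfl⟩
    choose x hx using fun j => hf j (Set.mem_univ j)
    have : Set.pi Set.univ f = {t : ι → ℝ | ∀ j, t j ≤ x j} := by
      ext t
      simp only [Set.mem_pi, Set.mem_univ, forall_true_left, Set.mem_setOf_eq]
      exact forall_congr' fun j => by rw [← hx j]; simp
    rw [this]
    exact hPQ x

lemma measure_conc_inter (P : Measure (ι → ℝ)) {C : Set (ι → ℝ)} (hP : P Cᶜ = 0)
    (A : Set (ι → ℝ)) : P (A ∩ C) = P A := by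
  refine le_antisymm (measure_mono Set.inter_subset_left) ?_
  calc P A ≤ P ((A ∩ C) ∪ Cᶜ) := measure_mono (by
        intro t ht
        by_cases htC : t ∈ C
        · exact Or.inl ⟨ht, htC⟩
        · exact Or.inr htC)
    _ ≤ P (A ∩ C) + P Cᶜ := measure_union_le _ _
    _ = P (A ∩ C) := by rw [hP, add_zero]

lemma ext_from_box [Nonempty ι] (P Q : Measure (ι → ℝ))
    [IsFiniteMeasure P] [IsFiniteMeasure Q]
    (hP : P {t : ι → ℝ | ∀ j, 0 ≤ t j ∧ t j < 1}ᶜ = 0)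
    (hQ : Q {t : ι → ℝ | ∀ j, 0 ≤ t j ∧ t j < 1}ᶜ = 0)
    (hbox : ∀ x : ι → ℝ, (∀ j, 0 ≤ x j ∧ x j < 1) →
      P {t | ∀ j, t j ≤ x j} = Q {t | ∀ j, t j ≤ x j}) : P = Q := by
  set C : Set (ι → ℝ) := {t : ι → ℝ | ∀ j, 0 ≤ t j ∧ t j < 1} with hC
  -- first: all lower sets
  have key : ∀ x : ι → ℝ, P {t | ∀ j, t j ≤ x j} = Q {t | ∀ j, t j ≤ x j} := by
    intro x
    by_cases hneg : ∀ j, 0 ≤ x j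
    · -- approximation from inside
      set y : ℕ → ι → ℝ := fun n j => min (x j) (1 - 1/(n+2 : ℝ)) with hy
      have hybox : ∀ n, ∀ j, 0 ≤ y n j ∧ y n j < 1 := by
        intro n j
        have h0 : (0:ℝ) < (n+2 : ℝ) := by positivity
        have h1 : 1/(n+2 : ℝ) ≤ 1 := by
          rw [div_le_one h0]; linarith
        have h2 : 0 < 1/(n+2 : ℝ) := by positivity
        exact ⟨le_min (hneg j) (by linarith), lt_of_le_of_lt (min_le_right _ _) (by linarith)⟩
      have hmono : Monotone (fun n => {t : ι → ℝ | ∀ j, t j ≤ y n j} ∩ C) := by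
        intro m n hmn
        refine Set.inter_subset_inter_left _ ?_
        intro t ht j
        refine le_trans (ht j) (min_le_min le_rfl ?_)
        have h1 : (m + 2 : ℝ) ≤ (n + 2 : ℝ) := by exact_mod_cast by omega
        have h2 : (0:ℝ) < m + 2 := by positivity
        have := one_div_le_one_div_of_le h2 h1
        linarith
      have hunion : (⋃ n, ({t : ι → ℝ | ∀ j, t j ≤ y n j} ∩ C))
          = {t : ι → ℝ | ∀ j, t j ≤ x j} ∩ C := by
        apply Set.Subset.antisymm
        · refine Set.iUnion_subset fun n => Set.inter_subset_inter_left _ ?_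
          intro t ht j
          exact le_trans (ht j) (min_le_left _ _)
        · rintro t ⟨htx, htC⟩
          have hvals : ∃ n : ℕ, ∀ j, t j ≤ 1 - 1/(n+2 : ℝ) := by
            obtain ⟨j0, -, hj0⟩ := Finset.exists_max_image Finset.univ t
              ⟨Classical.arbitrary ι, Finset.mem_univ _⟩
            have hM : t j0 < 1 := (htC j0).2
            obtain ⟨n, hn⟩ := exists_nat_one_div_lt (by linarith : (0:ℝ) < 1 - t j0)
            refine ⟨n, fun j => ?_⟩
            have hj := hj0 j (Finset.mem_univ j)
            have hle : 1/(n+2 : ℝ) ≤ 1/(n+1 : ℝ) := by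
              apply one_div_le_one_div_of_le
              · positivity
              · push_cast; linarith
            have : (1:ℝ)/(n+1) < 1 - t j0 := by exact_mod_cast hn
            linarith
          obtain ⟨n, hn⟩ := hvals
          refine Set.mem_iUnion.mpr ⟨n, ⟨fun j => le_min (htx j) (hn j), htC⟩⟩
      have hlimP : Tendsto (fun n => P ({t : ι → ℝ | ∀ j, t j ≤ y n j} ∩ C)) atTop
          (𝓝 (P ({t : ι → ℝ | ∀ j, t j ≤ x j} ∩ C))) := by
        rw [← hunion]
        exact tendsto_measure_iUnion_atTop hmono
      have hlimQ : Tendsto (fun n => Q ({t : ι → ℝ | ∀ j, t j ≤ y n j} ∩ C)) atTop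
          (𝓝 (Q ({t : ι → ℝ | ∀ j, t j ≤ x j} ∩ C))) := by
        rw [← hunion]
        exact tendsto_measure_iUnion_atTop hmono
      have heq : (fun n => P ({t : ι → ℝ | ∀ j, t j ≤ y n j} ∩ C))
          = fun n => Q ({t : ι → ℝ | ∀ j, t j ≤ y n j} ∩ C) := by
        funext n
        rw [measure_conc_inter P hP, measure_conc_inter Q hQ, hbox _ (hybox n)]
      rw [← measure_conc_inter P hP, ← measure_conc_inter Q hQ]
      exact tendsto_nhds_unique (heq ▸ hlimP) hlimQ
    · push_neg at hneg
      obtain ⟨j0, hj0⟩ := hneg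
      have hempty : {t : ι → ℝ | ∀ j, t j ≤ x j} ∩ C = ∅ := by
        ext t
        simp only [Set.mem_inter_iff, Set.mem_setOf_eq, Set.mem_empty_iff_false, iff_false]
        rintro ⟨htx, htC⟩
        exact absurd (le_trans (htC j0).1 (htx j0)) (not_le.mpr hj0)
      rw [← measure_conc_inter P hP, ← measure_conc_inter Q hQ, hempty]
      simp
  have huniv : P Set.univ = Q Set.univ := by
    have h1 : Set.univ ∩ C = {t : ι → ℝ | ∀ j, t j ≤ (1:ℝ)} ∩ C := by
      ext t
      simp only [Set.univ_inter, Set.mem_inter_iff, Set.mem_setOf_eq, hC]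
      exact ⟨fun ht => ⟨fun j => (ht j).2.le, ht⟩, fun ht => ht.2⟩
    calc P Set.univ = P (Set.univ ∩ C) := (measure_conc_inter P hP _).symm
      _ = P ({t : ι → ℝ | ∀ j, t j ≤ (fun _ => (1:ℝ)) j} ∩ C) := by rw [h1]
      _ = P {t : ι → ℝ | ∀ j, t j ≤ (fun _ => (1:ℝ)) j} := measure_conc_inter P hP _
      _ = Q {t : ι → ℝ | ∀ j, t j ≤ (fun _ => (1:ℝ)) j} := key _
      _ = Q ({t : ι → ℝ | ∀ j, t j ≤ (fun _ => (1:ℝ)) j} ∩ C) := (measure_conc_inter Q hQ _).symm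
      _ = Q (Set.univ ∩ C) := by rw [h1]
      _ = Q Set.univ := measure_conc_inter Q hQ _
  exact measure_ext_lower P Q huniv key


lemma sIntegral_congr_ae {α : Type*} [MeasurableSpace α] (ν : SignedMeasure α) {f g : α → ℝ}
    (hfg : f =ᵐ[ν.totalVariation] g) : sIntegral ν f = sIntegral ν g := by
  have hp : ν.toJordanDecomposition.posPart ≤ ν.totalVariation :=
    Measure.le_add_right le_rfl
  have hn : ν.toJordanDecomposition.negPart ≤ ν.totalVariation :=
    Measure.le_add_left le_rfl
  unfold sIntegral
  rw [integral_congr_ae (hfg.filter_mono (MeasureTheory.ae_mono hp)),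
    integral_congr_ae (hfg.filter_mono (MeasureTheory.ae_mono hn))]

lemma sIntegral_zero' {α : Type*} [MeasurableSpace α] (ν : SignedMeasure α) :
    sIntegral ν (fun _ => (0:ℝ)) = 0 := by
  simp [sIntegral]

lemma sIntegral_finset_sum {α : Type*} [MeasurableSpace α] (ν : SignedMeasure α)
    {β : Type*} (u : Finset β) (c : β → ℝ) (f : β → α → ℝ)
    (hp : ∀ b ∈ u, Integrable (f b) ν.toJordanDecomposition.posPart)
    (hn : ∀ b ∈ u, Integrable (f b) ν.toJordanDecomposition.negPart) :
    sIntegral ν (fun t => ∑ b ∈ u, c b * f b t) = ∑ b ∈ u, c b * sIntegral ν (f b) := by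
  unfold sIntegral
  rw [integral_finset_sum u (fun b hb => (hp b hb).const_mul (c b)),
    integral_finset_sum u (fun b hb => (hn b hb).const_mul (c b))]
  simp_rw [integral_const_mul]
  rw [← Finset.sum_sub_distrib]
  exact Finset.sum_congr rfl fun b _ => (mul_sub _ _ _).symm


section Claim1
variable {d : ℕ}

lemma claim1 (R : MarsRep d) (S : Finset (Fin d)) (hS : S.Nonempty)
    (x : {j // j ∈ S} → ℝ) (h : ℝ) :
    ∑ T ∈ S.powerset, (-1:ℝ)^(S.card + T.card) *
      marsFun R (fun j => (if hj : j ∈ S then x ⟨j, hj⟩ else 0) + if j ∈ T then h else 0)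
    = sIntegral (R.ν S) (fun t => ∏ j : {j // j ∈ S},
        (max (x j + h - t j) 0 - max (x j - t j) 0)) := by
  classical
  set X : Fin d → ℝ := fun j => if hj : j ∈ S then x ⟨j, hj⟩ else 0 with hX
  -- the alternating sum of constants vanishes
  have hsum0 : ∑ T ∈ S.powerset, (-1:ℝ)^(S.card + T.card) = 0 := by
    have h1 : ∑ T ∈ S.powerset, ((-1:ℤ)^T.card) = 0 :=
      Finset.sum_powerset_neg_one_pow_card_of_nonempty hS
    have h2 : ∑ T ∈ S.powerset, ((-1:ℝ)^T.card) = 0 := by exact_mod_cast h1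
    calc ∑ T ∈ S.powerset, (-1:ℝ)^(S.card + T.card)
        = (-1:ℝ)^S.card * ∑ T ∈ S.powerset, (-1:ℝ)^T.card := by
          rw [Finset.mul_sum]
          exact Finset.sum_congr rfl fun T _ => pow_add _ _ _
      _ = 0 := by rw [h2, mul_zero]
  -- expand marsFun and exchange sums
  have expand : ∀ T : Finset (Fin d), (-1:ℝ)^(S.card + T.card) *
      marsFun R (fun j => X j + if j ∈ T then h else 0)
      = (-1:ℝ)^(S.card + T.card) * R.a0 +
        ∑ S' : Finset (Fin d), (-1:ℝ)^(S.card + T.card) *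
          (if S'.Nonempty then
            sIntegral (R.ν S') (fun t => ∏ j : {j // j ∈ S'},
              max ((X j.1 + if j.1 ∈ T then h else 0) - t j) 0)
          else 0) := by
    intro T
    rw [marsFun, mul_add, Finset.mul_sum]
  calc ∑ T ∈ S.powerset, (-1:ℝ)^(S.card + T.card) *
        marsFun R (fun j => X j + if j ∈ T then h else 0)
      = ∑ T ∈ S.powerset, ((-1:ℝ)^(S.card + T.card) * R.a0 +
          ∑ S' : Finset (Fin d), (-1:ℝ)^(S.card + T.card) *
            (if S'.Nonempty then
              sIntegral (R.ν S') (fun t => ∏ j : {j // j ∈ S'},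
                max ((X j.1 + if j.1 ∈ T then h else 0) - t j) 0)
            else 0)) := Finset.sum_congr rfl fun T _ => expand T
    _ = (∑ T ∈ S.powerset, (-1:ℝ)^(S.card + T.card) * R.a0) +
        ∑ S' : Finset (Fin d), ∑ T ∈ S.powerset, (-1:ℝ)^(S.card + T.card) *
          (if S'.Nonempty then
            sIntegral (R.ν S') (fun t => ∏ j : {j // j ∈ S'},
              max ((X j.1 + if j.1 ∈ T then h else 0) - t j) 0)
          else 0) := by
        rw [Finset.sum_add_distrib, Finset.sum_comm]
    _ = ∑ S' : Finset (Fin d), ∑ T ∈ S.powerset, (-1:ℝ)^(S.card + T.card) *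
          (if S'.Nonempty then
            sIntegral (R.ν S') (fun t => ∏ j : {j // j ∈ S'},
              max ((X j.1 + if j.1 ∈ T then h else 0) - t j) 0)
          else 0) := by
        rw [← Finset.sum_mul, hsum0, zero_mul, zero_add]
    _ = sIntegral (R.ν S) (fun t => ∏ j : {j // j ∈ S},
          (max (x j + h - t j) 0 - max (x j - t j) 0)) := ?_
  -- Now evaluate the inner sum for each S'
  have haeTV : ∀ S' : Finset (Fin d), ∀ᵐ t ∂(R.ν S').totalVariation, ∀ j, 0 ≤ t j ∧ t j < 1 := by
    intro S'
    have hc := R.conc S'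
    rw [MeasureTheory.ae_iff]
    exact hc
  have haeP : ∀ S' : Finset (Fin d),
      ∀ᵐ t ∂(R.ν S').toJordanDecomposition.posPart, ∀ j, 0 ≤ t j :=
    fun S' => ((haeTV S').filter_mono (MeasureTheory.ae_mono (Measure.le_add_right le_rfl))).mono
      (fun t ht j => (ht j).1)
  have haeN : ∀ S' : Finset (Fin d),
      ∀ᵐ t ∂(R.ν S').toJordanDecomposition.negPart, ∀ j, 0 ≤ t j :=
    fun S' => ((haeTV S').filter_mono (MeasureTheory.ae_mono (Measure.le_add_left le_rfl))).mono
      (fun t ht j => (ht j).1)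
  have hprodT : ∀ (S' : Finset (Fin d)) (t : {j // j ∈ S'} → ℝ) (T : Finset (Fin d)),
      (∏ j : {j // j ∈ S'}, max ((X j.1 + if j.1 ∈ T then h else 0) - t j) 0)
      = ∏ j ∈ S', (if j ∈ T
          then max (X j + h - (if hj : j ∈ S' then t ⟨j, hj⟩ else 0)) 0
          else max (X j - (if hj : j ∈ S' then t ⟨j, hj⟩ else 0)) 0) := by
    intro S' t T
    rw [← Finset.prod_attach S' (fun j => if j ∈ T
          then max (X j + h - (if hj : j ∈ S' then t ⟨j, hj⟩ else 0)) 0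
          else max (X j - (if hj : j ∈ S' then t ⟨j, hj⟩ else 0)) 0),
      Finset.univ_eq_attach]
    refine Finset.prod_congr rfl fun j _ => ?_
    have ht : (if hj : j.1 ∈ S' then t ⟨j.1, hj⟩ else 0) = t j := dif_pos j.2
    rw [ht]
    by_cases hjT : j.1 ∈ T
    · simp only [if_pos hjT]
    · simp only [if_neg hjT, add_zero]
  have hpoint : ∀ (S' : Finset (Fin d)) (t : {j // j ∈ S'} → ℝ),
      (∑ T ∈ S.powerset, (-1:ℝ)^(S.card + T.card) *
        ∏ j : {j // j ∈ S'}, max ((X j.1 + if j.1 ∈ T then h else 0) - t j) 0)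
      = if S ⊆ S' then
          (∏ j ∈ S, (max (X j + h - (if hj : j ∈ S' then t ⟨j, hj⟩ else 0)) 0
            - max (X j - (if hj : j ∈ S' then t ⟨j, hj⟩ else 0)) 0)) *
          ∏ j ∈ S' \ S, max (X j - (if hj : j ∈ S' then t ⟨j, hj⟩ else 0)) 0
        else 0 := by
    intro S' t
    rw [Finset.sum_congr rfl fun T _ => by rw [hprodT S' t T]]
    exact alg_sum S S'
      (fun j => max (X j + h - (if hj : j ∈ S' then t ⟨j, hj⟩ else 0)) 0)
      (fun j => max (X j - (if hj : j ∈ S' then t ⟨j, hj⟩ else 0)) 0)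
  have hintP : ∀ (S' : Finset (Fin d)) (T : Finset (Fin d)),
      Integrable (fun t : {j // j ∈ S'} → ℝ => ∏ j : {j // j ∈ S'},
        max ((X j.1 + if j.1 ∈ T then h else 0) - t j) 0)
        (R.ν S').toJordanDecomposition.posPart :=
    fun S' T => integrable_prod_max _ (haeP S')
      (fun j : {j // j ∈ S'} => X j.1 + if j.1 ∈ T then h else 0)
  have hintN : ∀ (S' : Finset (Fin d)) (T : Finset (Fin d)),
      Integrable (fun t : {j // j ∈ S'} → ℝ => ∏ j : {j // j ∈ S'},
        max ((X j.1 + if j.1 ∈ T then h else 0) - t j) 0)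
        (R.ν S').toJordanDecomposition.negPart :=
    fun S' T => integrable_prod_max _ (haeN S')
      (fun j : {j // j ∈ S'} => X j.1 + if j.1 ∈ T then h else 0)
  have hswap : ∀ S' : Finset (Fin d), S'.Nonempty →
      (∑ T ∈ S.powerset, (-1:ℝ)^(S.card + T.card) *
        (if S'.Nonempty then
          sIntegral (R.ν S') (fun t => ∏ j : {j // j ∈ S'},
            max ((X j.1 + if j.1 ∈ T then h else 0) - t j) 0)
        else 0))
      = sIntegral (R.ν S') (fun t => ∑ T ∈ S.powerset, (-1:ℝ)^(S.card + T.card) *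
          ∏ j : {j // j ∈ S'}, max ((X j.1 + if j.1 ∈ T then h else 0) - t j) 0) := by
    intro S' hS'
    rw [Finset.sum_congr rfl fun T _ => by rw [if_pos hS']]
    rw [sIntegral_finset_sum (R.ν S') S.powerset _ _
      (fun T _ => hintP S' T) (fun T _ => hintN S' T)]
  have hzero : ∀ S' ∈ (Finset.univ : Finset (Finset (Fin d))), S' ≠ S →
      (∑ T ∈ S.powerset, (-1:ℝ)^(S.card + T.card) *
        (if S'.Nonempty then
          sIntegral (R.ν S') (fun t => ∏ j : {j // j ∈ S'},
            max ((X j.1 + if j.1 ∈ T then h else 0) - t j) 0)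
        else 0)) = 0 := by
    intro S' _ hne
    by_cases hS' : S'.Nonempty
    · rw [hswap S' hS']
      by_cases hsub : S ⊆ S'
      · -- strict superset: integrand vanishes a.e.
        obtain ⟨j0, hj0S', hj0S⟩ := Finset.exists_of_ssubset
          (hsub.ssubset_of_ne (fun hc => hne hc.symm))
        have hae : (fun t : {j // j ∈ S'} → ℝ => ∑ T ∈ S.powerset,
              (-1:ℝ)^(S.card + T.card) *
              ∏ j : {j // j ∈ S'}, max ((X j.1 + if j.1 ∈ T then h else 0) - t j) 0)
            =ᵐ[(R.ν S').totalVariation] (fun _ => (0:ℝ)) := by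
          filter_upwards [haeTV S'] with t ht
          rw [hpoint S' t, if_pos hsub]
          have hV0 : max (X j0 - (if hj : j0 ∈ S' then t ⟨j0, hj⟩ else 0)) 0 = 0 := by
            rw [dif_pos hj0S']
            have hX0 : X j0 = 0 := dif_neg hj0S
            have ht0 : 0 ≤ t ⟨j0, hj0S'⟩ := (ht ⟨j0, hj0S'⟩).1
            rw [hX0]
            exact max_eq_right (by linarith)
          rw [Finset.prod_eq_zero (Finset.mem_sdiff.mpr ⟨hj0S', hj0S⟩) hV0, mul_zero]
        rw [sIntegral_congr_ae (R.ν S') hae, sIntegral_zero']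
      · -- not a superset: integrand vanishes identically
        have hfn : (fun t : {j // j ∈ S'} → ℝ => ∑ T ∈ S.powerset,
              (-1:ℝ)^(S.card + T.card) *
              ∏ j : {j // j ∈ S'}, max ((X j.1 + if j.1 ∈ T then h else 0) - t j) 0)
            = fun _ => (0:ℝ) :=
          funext fun t => (hpoint S' t).trans (if_neg hsub)
        rw [hfn, sIntegral_zero']
    · rw [Finset.sum_congr rfl fun T _ => by rw [if_neg hS', mul_zero]]
      exact Finset.sum_const_zero
  rw [Finset.sum_eq_single_of_mem S (Finset.mem_univ S) hzero, hswap S hS]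
  have hfn : (fun t : {j // j ∈ S} → ℝ => ∑ T ∈ S.powerset,
        (-1:ℝ)^(S.card + T.card) *
        ∏ j : {j // j ∈ S}, max ((X j.1 + if j.1 ∈ T then h else 0) - t j) 0)
      = fun t : {j // j ∈ S} → ℝ => ∏ j : {j // j ∈ S},
          (max (x j + h - t j) 0 - max (x j - t j) 0) := by
    funext t
    rw [hpoint S t, if_pos (Finset.Subset.refl S), Finset.sdiff_self,
      Finset.prod_empty, mul_one]
    rw [← Finset.prod_attach S (fun j =>
        (max (X j + h - (if hj : j ∈ S then t ⟨j, hj⟩ else 0)) 0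
          - max (X j - (if hj : j ∈ S then t ⟨j, hj⟩ else 0)) 0)),
      Finset.univ_eq_attach]
    refine Finset.prod_congr rfl fun j _ => ?_
    have ht : (if hj : j.1 ∈ S then t ⟨j.1, hj⟩ else 0) = t j := dif_pos j.2
    have hx : X j.1 = x j := dif_pos j.2
    rw [ht, hx]
  rw [hfn]
end Claim1


lemma marsFun_zero {d : ℕ} (R : MarsRep d) : marsFun R (fun _ => 0) = R.a0 := by
  classical
  rw [marsFun]
  have hz : ∀ S : Finset (Fin d),
      (if S.Nonempty then
        sIntegral (R.ν S) (fun t => ∏ j : {j // j ∈ S},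
          max ((fun _ : Fin d => (0:ℝ)) j.1 - t j) 0)
      else 0) = 0 := by
    intro S
    by_cases hS : S.Nonempty
    · rw [if_pos hS]
      have haeTV : ∀ᵐ t ∂(R.ν S).totalVariation, ∀ j : {j // j ∈ S}, 0 ≤ t j ∧ t j < 1 := by
        rw [MeasureTheory.ae_iff]
        exact R.conc S
      have hae : (fun t : {j // j ∈ S} → ℝ => ∏ j : {j // j ∈ S},
            max ((fun _ : Fin d => (0:ℝ)) j.1 - t j) 0)
          =ᵐ[(R.ν S).totalVariation] (fun _ => (0:ℝ)) := by
        filter_upwards [haeTV] with t ht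
        obtain ⟨j0, hj0⟩ := hS
        refine Finset.prod_eq_zero (Finset.mem_univ (⟨j0, hj0⟩ : {j // j ∈ S})) ?_
        have := (ht ⟨j0, hj0⟩).1
        exact max_eq_right (by linarith)
      rw [sIntegral_congr_ae _ hae, sIntegral_zero']
    · rw [if_neg hS]
  rw [Finset.sum_congr rfl fun S _ => hz S, Finset.sum_const_zero, add_zero]


/-- Uniqueness of MARS representations: if two representations define
the same function on `[0,1]^d`, their constants agree and their signed measures agree
for every nonempty `S`. -/
theorem statement12 (d : ℕ) (hd : 1 ≤ d) (R R' : MarsRep d)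
    (h : ∀ x : Fin d → ℝ, (∀ k, x k ∈ Set.Icc (0 : ℝ) 1) →
      marsFun R x = marsFun R' x) :
    R.a0 = R'.a0 ∧ ∀ S : Finset (Fin d), S.Nonempty → R.ν S = R'.ν S := by
  classical
  constructor
  · have h0 := h (fun _ => 0) (fun k => ⟨le_rfl, zero_le_one⟩)
    rwa [marsFun_zero, marsFun_zero] at h0
  · intro S hS
    haveI hne : Nonempty {j // j ∈ S} := ⟨⟨hS.choose, hS.choose_spec⟩⟩
    set p := (R.ν S).toJordanDecomposition.posPart with hp
    set n := (R.ν S).toJordanDecomposition.negPart with hn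
    set p' := (R'.ν S).toJordanDecomposition.posPart with hp'
    set n' := (R'.ν S).toJordanDecomposition.negPart with hn'
    -- Step 1 : equality of "cdf" values on the unit box
    have step1 : ∀ xx : {j // j ∈ S} → ℝ, (∀ j, 0 ≤ xx j ∧ xx j < 1) →
        (p {t | ∀ j, t j ≤ xx j}).toReal - (n {t | ∀ j, t j ≤ xx j}).toReal
        = (p' {t | ∀ j, t j ≤ xx j}).toReal - (n' {t | ∀ j, t j ≤ xx j}).toReal := by
      intro xx hxx
      have hT1 := (tendsto_hat p xx).sub (tendsto_hat n xx)
      have hT2 := (tendsto_hat p' xx).sub (tendsto_hat n' xx)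
      have hEq : (fun hh : ℝ =>
            (∫ t, ∏ j : {j // j ∈ S},
              ((max (xx j + hh - t j) 0 - max (xx j - t j) 0) / hh) ∂p)
            - ∫ t, ∏ j : {j // j ∈ S},
              ((max (xx j + hh - t j) 0 - max (xx j - t j) 0) / hh) ∂n)
          =ᶠ[𝓝[>] (0:ℝ)]
          (fun hh : ℝ =>
            (∫ t, ∏ j : {j // j ∈ S},
              ((max (xx j + hh - t j) 0 - max (xx j - t j) 0) / hh) ∂p')
            - ∫ t, ∏ j : {j // j ∈ S},
              ((max (xx j + hh - t j) 0 - max (xx j - t j) 0) / hh) ∂n') := by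
        have hsmall : ∀ᶠ hh : ℝ in 𝓝[>] (0:ℝ), ∀ j : {j // j ∈ S}, xx j + hh ≤ 1 := by
          rw [Filter.eventually_all]
          intro j
          have hmem : Set.Ioo (0:ℝ) (1 - xx j) ∈ 𝓝[>] (0:ℝ) :=
            Ioo_mem_nhdsGT_of_mem ⟨le_rfl, by linarith [(hxx j).2]⟩
          exact Filter.eventually_of_mem hmem fun hh hhh => by
            obtain ⟨h1, h2⟩ := hhh; linarith
        filter_upwards [hsmall, self_mem_nhdsWithin] with hh hsm hpos
        have hpos' : (0:ℝ) < hh := hpos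
        -- rewrite both sides through `claim1`
        have hdiv : ∀ μ : Measure ({j // j ∈ S} → ℝ),
            (∫ t, ∏ j : {j // j ∈ S},
              ((max (xx j + hh - t j) 0 - max (xx j - t j) 0) / hh) ∂μ)
            = (∫ t, ∏ j : {j // j ∈ S},
                (max (xx j + hh - t j) 0 - max (xx j - t j) 0) ∂μ) / hh ^ S.card := by
          intro μ
          rw [← integral_div]
          congr 1
          funext t
          rw [Finset.prod_div_distrib, Finset.prod_const, Finset.card_univ,
            Fintype.card_coe]
        have hcomp : ∀ RR : MarsRep d,
            ((∫ t, ∏ j : {j // j ∈ S},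
                ((max (xx j + hh - t j) 0 - max (xx j - t j) 0) / hh)
                ∂(RR.ν S).toJordanDecomposition.posPart)
              - ∫ t, ∏ j : {j // j ∈ S},
                ((max (xx j + hh - t j) 0 - max (xx j - t j) 0) / hh)
                ∂(RR.ν S).toJordanDecomposition.negPart)
            = (∑ T ∈ S.powerset, (-1:ℝ)^(S.card + T.card) *
                marsFun RR (fun j => (if hj : j ∈ S then xx ⟨j, hj⟩ else 0) +
                  if j ∈ T then hh else 0)) / hh ^ S.card := by
          intro RR
          rw [hdiv, hdiv, div_sub_div_same, claim1 RR S hS xx hh]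
          rfl
        rw [hp, hn, hp', hn', hcomp R, hcomp R']
        congr 1
        refine Finset.sum_congr rfl fun T hT => ?_
        congr 1
        refine h _ fun k => ?_
        by_cases hkS : k ∈ S
        · rw [dif_pos hkS]
          constructor
          · have h1 := (hxx ⟨k, hkS⟩).1
            have : (0:ℝ) ≤ if k ∈ T then hh else 0 := by
              split <;> [exact hpos'.le; exact le_rfl]
            simpa using by linarith
          · have h2 := hsm ⟨k, hkS⟩
            have h3 := (hxx ⟨k, hkS⟩).2
            by_cases hkT : k ∈ T
            · rw [if_pos hkT]; exact h2
            · rw [if_neg hkT]; simpa using h3.le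
        · rw [dif_neg hkS]
          have hkT : k ∉ T := fun hc => hkS (Finset.mem_powerset.mp hT hc)
          rw [if_neg hkT]
          simp
      exact tendsto_nhds_unique (hT1.congr' hEq) hT2
    -- Step 2 : equality of measures p + n' and p' + n
    have hfinP : IsFiniteMeasure (p + n') := inferInstance
    have hfinQ : IsFiniteMeasure (p' + n) := inferInstance
    have hPc : (p + n') {t : {j // j ∈ S} → ℝ | ∀ j, 0 ≤ t j ∧ t j < 1}ᶜ = 0 := by
      have h1 : p {t : {j // j ∈ S} → ℝ | ∀ j, 0 ≤ t j ∧ t j < 1}ᶜ = 0 := by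
        refine le_antisymm ?_ (zero_le)
        calc p _ ≤ (R.ν S).totalVariation _ :=
              Measure.le_iff'.mp (Measure.le_add_right le_rfl) _
          _ = 0 := R.conc S
      have h2 : n' {t : {j // j ∈ S} → ℝ | ∀ j, 0 ≤ t j ∧ t j < 1}ᶜ = 0 := by
        refine le_antisymm ?_ (zero_le)
        calc n' _ ≤ (R'.ν S).totalVariation _ :=
              Measure.le_iff'.mp (Measure.le_add_left le_rfl) _
          _ = 0 := R'.conc S
      rw [Measure.add_apply, h1, h2, add_zero]
    have hQc : (p' + n) {t : {j // j ∈ S} → ℝ | ∀ j, 0 ≤ t j ∧ t j < 1}ᶜ = 0 := by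
      have h1 : p' {t : {j // j ∈ S} → ℝ | ∀ j, 0 ≤ t j ∧ t j < 1}ᶜ = 0 := by
        refine le_antisymm ?_ (zero_le)
        calc p' _ ≤ (R'.ν S).totalVariation _ :=
              Measure.le_iff'.mp (Measure.le_add_right le_rfl) _
          _ = 0 := R'.conc S
      have h2 : n {t : {j // j ∈ S} → ℝ | ∀ j, 0 ≤ t j ∧ t j < 1}ᶜ = 0 := by
        refine le_antisymm ?_ (zero_le)
        calc n _ ≤ (R.ν S).totalVariation _ :=
              Measure.le_iff'.mp (Measure.le_add_left le_rfl) _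
          _ = 0 := R.conc S
      rw [Measure.add_apply, h1, h2, add_zero]
    have step2 : ∀ xx : {j // j ∈ S} → ℝ, (∀ j, 0 ≤ xx j ∧ xx j < 1) →
        (p + n') {t | ∀ j, t j ≤ xx j} = (p' + n) {t | ∀ j, t j ≤ xx j} := by
      intro xx hxx
      have h1 := step1 xx hxx
      have h2 : (p {t | ∀ j, t j ≤ xx j}).toReal + (n' {t | ∀ j, t j ≤ xx j}).toReal
          = (p' {t | ∀ j, t j ≤ xx j}).toReal + (n {t | ∀ j, t j ≤ xx j}).toReal := by
        linarith
      rw [Measure.add_apply, Measure.add_apply]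
      have h3 : ((p {t | ∀ j, t j ≤ xx j} + n' {t | ∀ j, t j ≤ xx j})).toReal
          = ((p' {t | ∀ j, t j ≤ xx j} + n {t | ∀ j, t j ≤ xx j})).toReal := by
        rw [ENNReal.toReal_add (measure_ne_top _ _) (measure_ne_top _ _),
          ENNReal.toReal_add (measure_ne_top _ _) (measure_ne_top _ _)]
        exact h2
      exact (ENNReal.toReal_eq_toReal_iff'
        (by exact ENNReal.add_ne_top.mpr ⟨measure_ne_top _ _, measure_ne_top _ _⟩)
        (by exact ENNReal.add_ne_top.mpr ⟨measure_ne_top _ _, measure_ne_top _ _⟩)).mp h3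
    have hPQ : p + n' = p' + n := ext_from_box (p + n') (p' + n) hPc hQc step2
    -- conclude equality of the signed measures
    refine VectorMeasure.ext fun A hA => ?_
    have h1 : p A + n' A = p' A + n A := by
      rw [← Measure.add_apply, ← Measure.add_apply, hPQ]
    have h2 : (p A).toReal + (n' A).toReal = (p' A).toReal + (n A).toReal := by
      rw [← ENNReal.toReal_add (measure_ne_top _ _) (measure_ne_top _ _),
        ← ENNReal.toReal_add (measure_ne_top _ _) (measure_ne_top _ _), h1]
    have hv : ∀ ν : SignedMeasure ({j // j ∈ S} → ℝ),
        ν A = (ν.toJordanDecomposition.posPart A).toReal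
          - (ν.toJordanDecomposition.negPart A).toReal := by
      intro ν
      conv_lhs => rw [← ν.toSignedMeasure_toJordanDecomposition]
      rw [JordanDecomposition.toSignedMeasure, VectorMeasure.sub_apply,
        Measure.toSignedMeasure_apply_measurable hA,
        Measure.toSignedMeasure_apply_measurable hA]
      rfl
    rw [hv (R.ν S), hv (R'.ν S)]
    rw [hp, hn, hp', hn'] at h2
    linarith
end

section
/- Fix integers d ≥ 1 and n₁,…,n_d ≥ 2. For every θ : I₀ → ℝ and every i ∈ I₀, one has θ_i = (H^(2)θ)_0 + Σ_{α∈{0,1}^d, α≠0} Σ_{l∈I₀^(α), l≤i coordinatewise} (∏_{k=1}^d binom(i_k − l_k + α_k, α_k)) · (H^(2)θ)_l, where binom denotes the binomial coefficient (so the factor equals ∏_{k: α_k=1}(i_k − l_k + 1)). -/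
open Finset MeasureTheory

/-- The discrete mixed difference `(D^(β)θ)_i` (with `ℕ`-valued multi-indices). -/
noncomputable def mixedDiff (d : ℕ) (β : Fin d → ℕ) (θ : (Fin d → ℕ) → ℝ)
    (i : Fin d → ℕ) : ℝ :=
  ∑ δ ∈ Fintype.piFinset (fun k => Finset.range (β k + 1)),
    (-1 : ℝ) ^ (∑ k, δ k) * (∏ k, ((β k).choose (δ k) : ℝ)) * θ (fun k => i k - δ k)

/-- The index set `I₀^(β)`. -/
def idxBeta (d : ℕ) (n β : Fin d → ℕ) : Finset (Fin d → ℕ) :=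
  Fintype.piFinset fun k =>
    if β k = Finset.univ.sup β then Finset.Ico (Finset.univ.sup β) (n k)
    else {β k}

/-- The complexity measure `V₂(θ)`. -/
noncomputable def V2 (d : ℕ) (n : Fin d → ℕ) (θ : (Fin d → ℕ) → ℝ) : ℝ :=
  ∑ β ∈ (Fintype.piFinset fun _ : Fin d => Finset.range 3).filter
      (fun β => Finset.univ.sup β = 2),
    (∏ k, (n k : ℝ) ^ (if β k = 2 then 1 else β k)) *
      ∑ i ∈ idxBeta d n β, |mixedDiff d β θ i|

/-- Extension of a vector indexed by `I₀ = Π_k {0,…,n_k-1}` to all of `ℕ^d` (by `0`). -/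
noncomputable def latExtend (d : ℕ) (n : Fin d → ℕ)
    (θ : (∀ k : Fin d, Fin (n k)) → ℝ) : (Fin d → ℕ) → ℝ :=
  fun j => if h : ∀ k, j k < n k then θ (fun k => ⟨j k, h k⟩) else 0

/-- The constraint set `C(V) = {θ : V₂(θ) ≤ V}`. -/
def Cset (d : ℕ) (n : Fin d → ℕ) (V : ℝ) : Set ((∀ k : Fin d, Fin (n k)) → ℝ) :=
  { θ | V2 d n (latExtend d n θ) ≤ V }

/-- The product Gaussian measure on `ℝ^{I₀}` with i.i.d. `N(0, σ²)` coordinates. -/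
noncomputable def gaussPi (d : ℕ) (n : Fin d → ℕ) (σ : ℝ) :
    Measure ((∀ k : Fin d, Fin (n k)) → ℝ) :=
  Measure.pi fun _ => ProbabilityTheory.gaussianReal 0 ⟨σ ^ 2, sq_nonneg σ⟩

/-- The operator `H^(2)`: `(H^(2)θ)_i = (D^(β)θ)_i` where `β_k = min(i_k, 2)`
(this uniformly covers both cases of the definition). -/
noncomputable def H2 (d : ℕ) (θ : (Fin d → ℕ) → ℝ) (i : Fin d → ℕ) : ℝ :=
  mixedDiff d (fun k => min (i k) 2) θ i

noncomputable def gg (i l δ : ℕ) : ℝ :=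
  ((i - l + min l 1).choose (min l 1) : ℝ) * (-1 : ℝ) ^ δ * ((min l 2).choose δ : ℝ)

lemma coeffA (i m : ℕ) (hm : m ≤ i) :
    ∑ δ ∈ (Finset.range 3).filter (fun δ => m + δ ≤ i), gg i (m + δ) δ
      = if m = i then 1 else 0 := by
  unfold gg
  rw [Finset.sum_filter]
  rw [show (3 : ℕ) = 2 + 1 from rfl, Finset.sum_range_succ, Finset.sum_range_succ,
    Finset.sum_range_one]
  obtain ⟨r, rfl⟩ := Nat.exists_eq_add_of_le hm
  match r, m with
  | 0, 0 => norm_num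
  | 0, m + 1 => simp [Nat.add_sub_cancel_left]
  | 1, 0 => norm_num
  | 1, m + 1 => simp
  | r + 2, 0 => simp
  | r + 2, m + 1 => simp; ring

lemma core (d : ℕ) (θ : (Fin d → ℕ) → ℝ) (i : Fin d → ℕ) :
    ∑ l ∈ Fintype.piFinset (fun k => Finset.range (i k + 1)),
      (∏ k, ((i k - l k + min (l k) 1).choose (min (l k) 1) : ℝ)) * H2 d θ l = θ i := by
  have expand : ∀ l : Fin d → ℕ,
      (∏ k, ((i k - l k + min (l k) 1).choose (min (l k) 1) : ℝ)) * H2 d θ l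
      = ∑ δ ∈ Fintype.piFinset (fun k => Finset.range (min (l k) 2 + 1)),
          (∏ k, gg (i k) (l k) (δ k)) * θ (fun k => l k - δ k) := by
    intro l
    rw [H2, mixedDiff, Finset.mul_sum]
    refine Finset.sum_congr rfl fun δ hδ => ?_
    have hpow : ((-1 : ℝ)) ^ (∑ k, δ k) = ∏ k, (-1 : ℝ) ^ (δ k) :=
      (Finset.prod_pow_eq_pow_sum _ _ _).symm
    rw [hpow]
    unfold gg
    rw [Finset.prod_mul_distrib, Finset.prod_mul_distrib]
    ring
  simp_rw [expand]
  rw [Finset.sum_sigma' (Fintype.piFinset fun k => Finset.range (i k + 1))]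
  rw [Finset.sum_nbij' (i := fun p => (⟨fun k => p.1 k - p.2 k, p.2⟩ :
        Σ _ : Fin d → ℕ, Fin d → ℕ))
      (j := fun p => (⟨fun k => p.1 k + p.2 k, p.2⟩ : Σ _ : Fin d → ℕ, Fin d → ℕ))
      (t := (Fintype.piFinset fun k => Finset.range (i k + 1)).sigma
        (fun m => Fintype.piFinset fun k => (Finset.range 3).filter
          (fun δ => m k + δ ≤ i k)))
      (g := fun p => (∏ k, gg (i k) (p.1 k + p.2 k) (p.2 k)) * θ p.1)]
  · rw [Finset.sum_sigma _ _ (fun p : Σ _ : Fin d → ℕ, Fin d → ℕ =>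
        (∏ k, gg (i k) (p.1 k + p.2 k) (p.2 k)) * θ p.1)]
    have step : ∀ m ∈ Fintype.piFinset (fun k => Finset.range (i k + 1)),
        (∑ δ ∈ Fintype.piFinset (fun k => (Finset.range 3).filter
            (fun δ => m k + δ ≤ i k)),
          (∏ k, gg (i k) (m k + δ k) (δ k)) * θ m)
        = (if m = i then 1 else 0) * θ m := by
      intro m hm
      rw [← Finset.sum_mul, ← Finset.prod_univ_sum
        (fun k => (Finset.range 3).filter (fun δ => m k + δ ≤ i k))
        (fun k δ => gg (i k) (m k + δ) δ)]
      congr 1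
      have : ∀ k, (∑ δ ∈ (Finset.range 3).filter (fun δ => m k + δ ≤ i k),
          gg (i k) (m k + δ) δ) = if m k = i k then 1 else 0 := by
        intro k
        refine coeffA (i k) (m k) ?_
        simp [Fintype.mem_piFinset] at hm
        exact hm k
      simp_rw [this]
      by_cases h : m = i
      · simp [h]
      · obtain ⟨k, hk⟩ : ∃ k, m k ≠ i k := by
          by_contra hc; push_neg at hc; exact h (funext hc)
        rw [Finset.prod_eq_zero (Finset.mem_univ k) (by simp [hk])]
        simp [h]
    rw [Finset.sum_congr rfl step]
    have hi : i ∈ Fintype.piFinset (fun k => Finset.range (i k + 1)) := by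
      simp [Fintype.mem_piFinset, Nat.lt_succ_iff]
    simp [Finset.sum_ite_eq' _ i]
  · rintro ⟨l, δ⟩ hp
    simp only [Finset.mem_sigma, Fintype.mem_piFinset, Finset.mem_range,
      Finset.mem_filter] at hp ⊢
    constructor
    · intro k; have := hp.1 k; omega
    · intro k; have h1 := hp.1 k; have h2 := hp.2 k
      have : δ k ≤ min (l k) 2 := by omega
      constructor
      · omega
      · have : δ k ≤ l k := le_trans this (min_le_left _ _); omega
  · rintro ⟨m, δ⟩ hp
    simp only [Finset.mem_sigma, Fintype.mem_piFinset, Finset.mem_range,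
      Finset.mem_filter] at hp ⊢
    constructor
    · intro k; have := hp.2 k; omega
    · intro k; have h1 := hp.1 k; have h2 := hp.2 k; omega
  · rintro ⟨l, δ⟩ hp
    simp only [Finset.mem_sigma, Fintype.mem_piFinset, Finset.mem_range] at hp
    have : ∀ k, l k - δ k + δ k = l k := by
      intro k; have := hp.2 k
      have : δ k ≤ l k := by
        have : δ k ≤ min (l k) 2 := by omega
        exact le_trans this (min_le_left _ _)
      omega
    simp only [Sigma.mk.inj_iff, heq_eq_eq]
    exact ⟨funext this, trivial⟩
  · rintro ⟨m, δ⟩ hp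
    simp only [Sigma.mk.inj_iff, heq_eq_eq]
    exact ⟨funext fun k => by omega, trivial⟩
  · rintro ⟨l, δ⟩ hp
    simp only [Finset.mem_sigma, Fintype.mem_piFinset, Finset.mem_range] at hp
    have hdl : ∀ k, l k - δ k + δ k = l k := by
      intro k
      have : δ k ≤ min (l k) 2 := by have := hp.2 k; omega
      have : δ k ≤ l k := le_trans this (min_le_left _ _)
      omega
    simp only []
    congr 1
    refine Finset.prod_congr rfl fun k _ => ?_
    rw [hdl k]

lemma sup_eq_one {d : ℕ} (α : Fin d → ℕ) (h1 : ∀ k, α k ≤ 1) (k0 : Fin d)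
    (h2 : α k0 = 1) : Finset.univ.sup α = 1 :=
  le_antisymm (Finset.sup_le fun k _ => h1 k) (h2 ▸ Finset.le_sup (Finset.mem_univ k0))

/-- The inversion identity recovering `θ` from its second-order
mixed differences `H^(2)θ`:
`θ_i = (H^(2)θ)_0 + Σ_{α ≠ 0} Σ_{l ∈ I₀^(α), l ≤ i} Π_k C(i_k - l_k + α_k, α_k) (H^(2)θ)_l`. -/
theorem statement18 (d : ℕ) (hd : 1 ≤ d) (n : Fin d → ℕ) (hn : ∀ k, 2 ≤ n k)
    (θ : (Fin d → ℕ) → ℝ) (i : Fin d → ℕ) (hi : ∀ k, i k < n k) :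
    θ i = H2 d θ (fun _ => 0) +
      ∑ α ∈ (Fintype.piFinset fun _ : Fin d => Finset.range 2).filter
          (fun α => α ≠ fun _ => 0),
        ∑ l ∈ (idxBeta d n α).filter (fun l => ∀ k, l k ≤ i k),
          (∏ k, ((i k - l k + α k).choose (α k) : ℝ)) * H2 d θ l := by
  have hz : (fun _ => (0 : ℕ)) ∈ (Fintype.piFinset fun k => Finset.range (i k + 1)) := by
    simp
  rw [← core d θ i, ← Finset.add_sum_erase _ _ hz]
  congr 1
  · simp
  · rw [Finset.sum_sigma'
      ((Fintype.piFinset fun _ : Fin d => Finset.range 2).filter (fun α => α ≠ fun _ => 0))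
      (fun α => (idxBeta d n α).filter (fun l => ∀ k, l k ≤ i k))
      (fun α l => (∏ k, ((i k - l k + α k).choose (α k) : ℝ)) * H2 d θ l)]
    refine Finset.sum_nbij'
      (i := fun l => (⟨fun k => min (l k) 1, l⟩ : Σ _ : Fin d → ℕ, Fin d → ℕ))
      (j := fun p => p.2) ?_ ?_ ?_ ?_ ?_
    · intro l hl
      simp only [Finset.mem_erase, Fintype.mem_piFinset, Finset.mem_range,
        Nat.lt_succ_iff] at hl
      obtain ⟨hlne, hlle⟩ := hl
      obtain ⟨k0, hk0⟩ := Function.ne_iff.mp hlne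
      have hα1 : min (l k0) 1 = 1 := by omega
      have hsup : Finset.univ.sup (fun k => min (l k) 1) = 1 :=
        sup_eq_one _ (fun k => min_le_right _ _) k0 hα1
      simp only [Finset.mem_sigma, Finset.mem_filter, Fintype.mem_piFinset,
        Finset.mem_range]
      refine ⟨⟨fun k => by omega, ?_⟩, ?_, fun k => hlle k⟩
      · exact Function.ne_iff.mpr ⟨k0, by omega⟩
      · rw [idxBeta, Fintype.mem_piFinset]
        intro k
        rw [hsup]
        by_cases h : min (l k) 1 = 1
        · rw [if_pos h, Finset.mem_Ico]
          exact ⟨by omega, lt_of_le_of_lt (hlle k) (hi k)⟩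
        · have : l k = 0 := by omega
          simp [h, this]
    · rintro ⟨α, l⟩ hp
      simp only [Finset.mem_sigma, Finset.mem_filter, Fintype.mem_piFinset,
        Finset.mem_range] at hp
      obtain ⟨⟨hα2, hαne⟩, hlidx, hlle⟩ := hp
      obtain ⟨k0, hk0⟩ := Function.ne_iff.mp hαne
      have hα1 : α k0 = 1 := by have := hα2 k0; omega
      have hsup : Finset.univ.sup α = 1 :=
        sup_eq_one _ (fun k => by have := hα2 k; omega) k0 hα1
      rw [idxBeta, Fintype.mem_piFinset] at hlidx
      simp only [Finset.mem_erase, Fintype.mem_piFinset, Finset.mem_range,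
        Nat.lt_succ_iff]
      constructor
      · have := hlidx k0
        rw [hsup, hα1, if_pos rfl, Finset.mem_Ico] at this
        exact Function.ne_iff.mpr ⟨k0, by omega⟩
      · exact fun k => hlle k
    · intro l hl; rfl
    · rintro ⟨α, l⟩ hp
      simp only [Finset.mem_sigma, Finset.mem_filter, Fintype.mem_piFinset,
        Finset.mem_range] at hp
      obtain ⟨⟨hα2, hαne⟩, hlidx, hlle⟩ := hp
      obtain ⟨k0, hk0⟩ := Function.ne_iff.mp hαne
      have hα1 : α k0 = 1 := by have := hα2 k0; omega
      have hsup : Finset.univ.sup α = 1 :=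
        sup_eq_one _ (fun k => by have := hα2 k; omega) k0 hα1
      rw [idxBeta, Fintype.mem_piFinset] at hlidx
      have hmin : ∀ k, min (l k) 1 = α k := by
        intro k
        have := hlidx k
        rw [hsup] at this
        by_cases h : α k = 1
        · rw [h, if_pos rfl, Finset.mem_Ico] at this; omega
        · rw [if_neg h, Finset.mem_singleton] at this
          have := hα2 k; omega
      simp only [Sigma.mk.inj_iff, heq_eq_eq]
      exact ⟨funext hmin, trivial⟩
    · intro l hl
      simp only [Finset.mem_erase, Fintype.mem_piFinset, Finset.mem_range,
        Nat.lt_succ_iff] at hl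
      rfl
end

section
/- For every integer m ≥ 1 there exists a constant c_m > 0 depending only on m such that for all positive integers a₁,…,a_m and all β, β' ∈ ℝ^I, the functions G_β, G_{β'} : [0,1]^m → ℝ defined by G_β(x) = Σ_{j∈I} β_j · ∏_{k=1}^m max(x_k − (j_k − 1)/a_k, 0) satisfy (∫_{[0,1]^m} (G_β − G_{β'})²)^{1/2} ≥ c_m · (a₁⋯a_m)^{−3/2} · ‖(L_I)²β − (L_I)²β'‖₂, where the integral is with respect to Lebesgue measure and ‖·‖₂ is the Euclidean norm on ℝ^I. -/
open Finset MeasureTheory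

/-- The unit cube `[0,1]^m`. -/
def marsCube (m : ℕ) : Set (Fin m → ℝ) := Set.univ.pi fun _ => Set.Icc 0 1

/-- The map `(L_I)²` : `((L_I)²β)_i = Σ_{j ≤ i} (Π_k (i_k - j_k + 1)) β_j`. -/
noncomputable def Lsq (m : ℕ) (a : Fin m → ℕ)
    (β : (∀ k, Fin (a k)) → ℝ) : (∀ k, Fin (a k)) → ℝ :=
  fun i => ∑ j : ∀ k, Fin (a k),
    (if ∀ k, (j k : ℕ) ≤ (i k : ℕ) then
        ∏ k, (((i k : ℕ) : ℝ) - ((j k : ℕ) : ℝ) + 1)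
      else 0) * β j

/-- The piecewise-polynomial function
`G_β(x) = Σ_{j∈I} β_j Π_k (x_k - (j_k - 1)/a_k)₊` (with `j` in `Π_k {1,…,a_k}`,
represented by `0`-based indices). -/
noncomputable def Gfun (m : ℕ) (a : Fin m → ℕ)
    (β : (∀ k, Fin (a k)) → ℝ) (x : Fin m → ℝ) : ℝ :=
  ∑ j : ∀ k, Fin (a k), β j * ∏ k, max (x k - ((j k : ℕ) : ℝ) / (a k : ℝ)) 0

lemma oned (p q l u : ℝ) (h : l ≤ u) :
    (u - l)/4 * (p + q*u)^2 ≤ ∫ t in Set.Icc l u, (p + q*t)^2 := by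
  have hF : ∀ t : ℝ, HasDerivAt (fun s => p^2*s + p*q*s^2 + q^2*s^3/3) ((p+q*t)^2) t := by
    intro t
    have h1 := ((hasDerivAt_id t).const_mul (p^2)).add
      (((hasDerivAt_pow 2 t).const_mul (p*q)).add (((hasDerivAt_pow 3 t).const_mul (q^2)).div_const 3))
    have e1 : (fun s => p^2*s + p*q*s^2 + q^2*s^3/3) = (fun y => p ^ 2 * id y) + ((fun y => p * q * y ^ 2) + fun x => q ^ 2 * x ^ 3 / 3) := by
      funext s; simp only [Pi.add_apply, id_eq]; ring
    rw [e1]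
    exact h1.congr_deriv (by norm_num <;> ring)
  have hint : ∫ t in l..u, (p + q*t)^2 =
      (p^2*u + p*q*u^2 + q^2*u^3/3) - (p^2*l + p*q*l^2 + q^2*l^3/3) := by
    apply intervalIntegral.integral_eq_sub_of_hasDerivAt (fun t _ => hF t)
    exact (Continuous.intervalIntegrable (by continuity) l u)
  rw [MeasureTheory.integral_Icc_eq_integral_Ioc, ← intervalIntegral.integral_of_le h, hint]
  nlinarith [mul_nonneg (sub_nonneg.2 h) (sq_nonneg (3*p+2*q*l+q*u))]

lemma multiaffine {ι : Type*} [Fintype ι] :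
    ∀ (m : ℕ) (c : ι → ℝ) (b : ι → Fin m → ℝ) (l u : Fin m → ℝ), (∀ k, l k ≤ u k) →
    (∏ k, (u k - l k)/4) * (∑ j, c j * ∏ k, (u k - b j k))^2 ≤
      ∫ x in Set.univ.pi (fun k => Set.Icc (l k) (u k)), (∑ j, c j * ∏ k, (x k - b j k))^2 := by
  intro m
  induction m with
  | zero =>
    intro c b l u hlu
    have hbox : Set.univ.pi (fun k : Fin 0 => Set.Icc (l k) (u k)) = Set.univ := by
      ext x; simp
    simp only [hbox, Finset.univ_eq_empty, Finset.prod_empty, mul_one, one_mul,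
      Measure.restrict_univ]
    rw [integral_const]
    have : (volume : Measure (Fin 0 → ℝ)) Set.univ = 1 := by
      rw [volume_pi, Measure.pi_univ]; simp
    rw [measureReal_def, this]
    simp
  | succ m ih =>
    intro c b l u hlu
    set e := MeasurableEquiv.piFinSuccAbove (fun _ : Fin (m+1) => ℝ) 0 with he
    set F : ℝ × (Fin m → ℝ) → ℝ :=
      fun z => ∑ j, c j * ((z.1 - b j 0) * ∏ k, (z.2 k - b j k.succ)) with hFdef
    have hGe : ∀ x : Fin (m+1) → ℝ,
        (∑ j, c j * ∏ k, (x k - b j k)) = F (e x) := by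
      intro x
      refine Finset.sum_congr rfl fun j _ => ?_
      rw [Fin.prod_univ_succ]
      simp [he, MeasurableEquiv.piFinSuccAbove, Fin.zero_succAbove, Fin.tail]
    -- the box splits
    set box' : Set (Fin m → ℝ) := Set.univ.pi (fun k => Set.Icc (l k.succ) (u k.succ)) with hbox'
    have hpre : Set.univ.pi (fun k : Fin (m+1) => Set.Icc (l k) (u k)) =
        e ⁻¹' ((Set.Icc (l 0) (u 0)) ×ˢ box') := by
      ext x
      simp only [Set.mem_pi, Set.mem_univ, forall_true_left, Set.mem_preimage,
        Set.mem_prod, hbox', he, MeasurableEquiv.piFinSuccAbove, MeasurableEquiv.coe_mk,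
        Equiv.symm_symm]
      rw [Fin.forall_fin_succ]
      simp [Fin.zero_succAbove, Fin.tail, Fin.insertNthEquiv]
    -- continuity and integrability
    have hFcont : Continuous (fun z => (F z)^2) := by
      apply Continuous.pow
      apply continuous_finset_sum
      intro j _
      exact continuous_const.mul (((continuous_fst.sub continuous_const).mul
        (continuous_finset_prod _ fun k _ =>
          ((continuous_apply k).comp continuous_snd).sub continuous_const)))
    have hcomp : IsCompact ((Set.Icc (l 0) (u 0)) ×ˢ box') :=
      (isCompact_Icc).prod (isCompact_univ_pi fun k => isCompact_Icc)
    have hFint : IntegrableOn (fun z => (F z)^2) ((Set.Icc (l 0) (u 0)) ×ˢ box')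
        ((volume : Measure ℝ).prod (volume : Measure (Fin m → ℝ))) := by
      rw [← Measure.volume_eq_prod]
      exact hFcont.continuousOn.integrableOn_compact hcomp
    -- transfer the integral
    have hMP : MeasurePreserving e (volume : Measure (Fin (m+1) → ℝ))
        ((volume : Measure ℝ).prod (volume : Measure (Fin m → ℝ))) := by
      have := measurePreserving_piFinSuccAbove (fun _ : Fin (m+1) => (volume : Measure ℝ)) 0
      rw [volume_pi, show (volume : Measure (Fin m → ℝ)) = Measure.pi fun _ => volume from volume_pi]
      exact this
    have hstep1 : ∫ x in Set.univ.pi (fun k : Fin (m+1) => Set.Icc (l k) (u k)),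
        (∑ j, c j * ∏ k, (x k - b j k))^2
        = ∫ t in Set.Icc (l 0) (u 0), ∫ y in box', (F (t, y))^2 := by
      rw [show (fun x => (∑ j, c j * ∏ k, (x k - b j k))^2) = fun x => (F (e x))^2 by
        funext x; rw [hGe]]
      rw [hpre]
      have h2 := hMP.setIntegral_preimage_emb e.measurableEmbedding
        (fun z => (F z)^2) ((Set.Icc (l 0) (u 0)) ×ˢ box')
      exact h2.trans (setIntegral_prod _ hFint)
    set K' := ∏ k : Fin m, (u k.succ - l k.succ)/4 with hK'
    set Q := ∑ j, c j * ∏ k : Fin m, (u k.succ - b j k.succ) with hQ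
    set P := ∑ j, (- b j 0) * (c j * ∏ k : Fin m, (u k.succ - b j k.succ)) with hP
    have hS : ∀ t : ℝ, (∑ j, c j * (t - b j 0) * ∏ k : Fin m, (u k.succ - b j k.succ))
        = P + Q * t := by
      intro t
      rw [hP, hQ, Finset.sum_mul, ← Finset.sum_add_distrib]
      exact Finset.sum_congr rfl fun j _ => by ring
    have hFeq : ∀ (t : ℝ) (y : Fin m → ℝ),
        F (t, y) = ∑ j, c j * (t - b j 0) * ∏ k : Fin m, (y k - b j k.succ) :=
      fun t y => Finset.sum_congr rfl fun j _ => (mul_assoc _ _ _).symm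
    have hKnn : 0 ≤ K' := Finset.prod_nonneg fun k _ => by
      have := hlu k.succ; linarith
    have hinner : ∀ t : ℝ, K' * (P + Q*t)^2 ≤ ∫ y in box', (F (t,y))^2 := by
      intro t
      have h1 := ih (fun j => c j * (t - b j 0)) (fun j k => b j k.succ)
        (fun k => l k.succ) (fun k => u k.succ) (fun k => hlu k.succ)
      beta_reduce at h1
      rw [hS t] at h1
      calc K' * (P + Q*t)^2 ≤ _ := h1
        _ = ∫ y in box', (F (t,y))^2 := by
            refine setIntegral_congr_fun ?_ fun y _ => ?_
            · exact MeasurableSet.univ_pi fun k => measurableSet_Icc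
            · rw [hFeq]
    have hgInt : IntegrableOn (fun t => ∫ y in box', (F (t,y))^2)
        (Set.Icc (l 0) (u 0)) volume := by
      have h3 := hFint
      rw [IntegrableOn, ← Measure.prod_restrict] at h3
      exact h3.integral_prod_left
    have hhInt : IntegrableOn (fun t => K' * (P + Q*t)^2) (Set.Icc (l 0) (u 0)) volume :=
      ((continuous_const.mul ((continuous_const.add (continuous_const.mul continuous_id)).pow 2)).continuousOn).integrableOn_compact isCompact_Icc
    have hval : (∑ j, c j * ∏ k : Fin (m+1), (u k - b j k)) = P + Q * u 0 := by
      rw [← hS (u 0)]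
      exact Finset.sum_congr rfl fun j _ => by rw [Fin.prod_univ_succ]; ring
    rw [hstep1, Fin.prod_univ_succ, hval]
    calc (u 0 - l 0)/4 * K' * (P + Q * u 0)^2
        = K' * ((u 0 - l 0)/4 * (P + Q * u 0)^2) := by ring
      _ ≤ K' * ∫ t in Set.Icc (l 0) (u 0), (P + Q*t)^2 :=
          mul_le_mul_of_nonneg_left (oned P Q (l 0) (u 0) (hlu 0)) hKnn
      _ = ∫ t in Set.Icc (l 0) (u 0), K' * (P + Q*t)^2 := (integral_const_mul _ _).symm
      _ ≤ ∫ t in Set.Icc (l 0) (u 0), ∫ y in box', (F (t,y))^2 :=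
          setIntegral_mono_on hhInt hgInt measurableSet_Icc fun t _ => hinner t

/-- Lower-Lipschitz inequality: the `L²([0,1]^m)` distance between
`G_β` and `G_{β'}` is at least `c_m (a₁⋯a_m)^{-3/2}` times the Euclidean distance
between `(L_I)²β` and `(L_I)²β'`. -/
theorem statement19 (m : ℕ) (hm : 1 ≤ m) :
    ∃ c : ℝ, 0 < c ∧
      ∀ a : Fin m → ℕ, (∀ k, 1 ≤ a k) →
        ∀ β β' : (∀ k, Fin (a k)) → ℝ,
          c * (∏ k, (a k : ℝ)) ^ (-(3 : ℝ) / 2) *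
              Real.sqrt (∑ i, (Lsq m a β i - Lsq m a β' i) ^ 2) ≤
            Real.sqrt (∫ x in marsCube m, (Gfun m a β x - Gfun m a β' x) ^ 2) := by
  refine ⟨(1/2)^m, by positivity, ?_⟩
  intro a ha β β'
  have hapos : ∀ k, (0:ℝ) < (a k : ℝ) := fun k => by exact_mod_cast (ha k)
  have hA : (0:ℝ) < ∏ k, (a k : ℝ) := Finset.prod_pos fun k _ => hapos k
  set γ : (∀ k, Fin (a k)) → ℝ := fun j => β j - β' j with hγ
  have hGdiff : ∀ x, Gfun m a β x - Gfun m a β' x = Gfun m a γ x := by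
    intro x; simp only [Gfun, ← Finset.sum_sub_distrib, hγ, sub_mul]
  have hLdiff : ∀ i, Lsq m a β i - Lsq m a β' i = Lsq m a γ i := by
    intro i; simp only [Lsq, ← Finset.sum_sub_distrib, hγ, mul_sub]
  simp only [hGdiff, hLdiff]
  -- main quantitative bound
  have key : (1/4:ℝ)^m * (((∏ k, (a k : ℝ))^3)⁻¹ * (∑ i, (Lsq m a γ i)^2))
      ≤ ∫ x in marsCube m, (Gfun m a γ x)^2 := by
    have hGcont : Continuous (Gfun m a γ) := by
      unfold Gfun
      exact continuous_finset_sum _ fun j _ => continuous_const.mul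
        (continuous_finset_prod _ fun k _ =>
          ((continuous_apply k).sub continuous_const).max continuous_const)
    have hint : IntegrableOn (fun x => (Gfun m a γ x)^2) (marsCube m) := by
      apply ((hGcont.pow 2).continuousOn).integrableOn_compact
      exact isCompact_univ_pi fun k => isCompact_Icc
    set S : (∀ k, Fin (a k)) → Set (Fin m → ℝ) := fun i => Set.univ.pi fun k =>
      Set.Ico (((i k : ℕ) : ℝ)/(a k)) ((((i k : ℕ) : ℝ)+1)/(a k)) with hS
    set B : (∀ k, Fin (a k)) → Set (Fin m → ℝ) := fun i => Set.univ.pi fun k =>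
      Set.Icc (((i k : ℕ) : ℝ)/(a k)) ((((i k : ℕ) : ℝ)+1)/(a k)) with hB
    have hmeasS : ∀ i, MeasurableSet (S i) :=
      fun i => MeasurableSet.univ_pi fun k => measurableSet_Ico
    have hsub : ∀ i, S i ⊆ marsCube m := by
      intro i x hx k _
      have h1 := hx k (Set.mem_univ k)
      simp only [Set.mem_Ico] at h1
      constructor
      · have : (0:ℝ)/(a k) ≤ ((i k : ℕ) : ℝ)/(a k) :=
          (div_le_div_iff_of_pos_right (hapos k)).mpr (by positivity)
        simpa using le_trans this h1.1
      · have h2 : (((i k : ℕ) : ℝ)+1)/(a k) ≤ (a k : ℝ)/(a k) := by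
          apply (div_le_div_iff_of_pos_right (hapos k)).mpr
          have := (i k).isLt
          exact_mod_cast Nat.succ_le_of_lt this
        rw [div_self (hapos k).ne'] at h2
        exact le_trans h1.2.le h2
    have hdisj : ((Finset.univ : Finset (∀ k, Fin (a k))) : Set (∀ k, Fin (a k))).Pairwise
        (Function.onFun Disjoint S) := by
      intro i _ i' _ hne
      have hex : ∃ k, i k ≠ i' k := by
        by_contra hc; push_neg at hc; exact hne (funext hc)
      obtain ⟨k, hk⟩ := hex
      refine Set.disjoint_left.mpr fun x hx hx' => ?_
      have h1 := hx k (Set.mem_univ k); have h2 := hx' k (Set.mem_univ k)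
      simp only [Set.mem_Ico] at h1 h2
      have hkk : (i k : ℕ) ≠ (i' k : ℕ) := fun h => hk (Fin.ext h)
      rcases lt_or_gt_of_ne hkk with h | h
      · have : (((i k : ℕ) : ℝ)+1)/(a k) ≤ ((i' k : ℕ) : ℝ)/(a k) := by
          apply (div_le_div_iff_of_pos_right (hapos k)).mpr
          exact_mod_cast Nat.succ_le_of_lt h
        linarith [h1.2, h2.1]
      · have : (((i' k : ℕ) : ℝ)+1)/(a k) ≤ ((i k : ℕ) : ℝ)/(a k) := by
          apply (div_le_div_iff_of_pos_right (hapos k)).mpr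
          exact_mod_cast Nat.succ_le_of_lt h
        linarith [h1.1, h2.2]
    have hsum : ∑ i, ∫ x in S i, (Gfun m a γ x)^2 ≤ ∫ x in marsCube m, (Gfun m a γ x)^2 := by
      rw [← integral_biUnion_finset Finset.univ (fun i _ => hmeasS i) hdisj
        (fun i _ => hint.mono_set (hsub i))]
      exact setIntegral_mono_set hint (Filter.Eventually.of_forall fun x => sq_nonneg _)
        (HasSubset.Subset.eventuallyLE (Set.iUnion₂_subset fun i _ => hsub i))
    refine le_trans ?_ hsum
    have hbox : ∀ i, (1/4:ℝ)^m * (((∏ k, (a k : ℝ))^3)⁻¹ * (Lsq m a γ i)^2)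
        ≤ ∫ x in S i, (Gfun m a γ x)^2 := by
      intro i
      have hSB : ∫ x in S i, (Gfun m a γ x)^2 = ∫ x in B i, (Gfun m a γ x)^2 := by
        apply setIntegral_congr_set
        rw [show (volume : Measure (Fin m → ℝ)) = Measure.pi fun _ => volume from volume_pi]
        exact MeasureTheory.Measure.pi_Ico_ae_eq_pi_Icc
      have hpoly : ∀ x ∈ B i, (Gfun m a γ x)^2 =
          (∑ j, (if ∀ k, (j k : ℕ) ≤ (i k : ℕ) then γ j else 0) *
            ∏ k, (x k - ((j k : ℕ) : ℝ)/(a k)))^2 := by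
        intro x hx
        congr 1
        simp only [Gfun]
        refine Finset.sum_congr rfl fun j _ => ?_
        have hx' : ∀ k, x k ∈ Set.Icc (((i k : ℕ) : ℝ)/(a k)) ((((i k : ℕ) : ℝ)+1)/(a k)) :=
          fun k => hx k (Set.mem_univ k)
        by_cases hji : ∀ k, (j k : ℕ) ≤ (i k : ℕ)
        · rw [if_pos hji]
          refine congrArg _ (Finset.prod_congr rfl fun k _ => ?_)
          apply max_eq_left
          have hle : ((j k : ℕ) : ℝ)/(a k) ≤ ((i k : ℕ) : ℝ)/(a k) :=
            (div_le_div_iff_of_pos_right (hapos k)).mpr (by exact_mod_cast hji k)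
          have := (hx' k).1
          linarith
        · rw [if_neg hji, zero_mul]
          push_neg at hji
          obtain ⟨k₀, hk₀⟩ := hji
          have hzero : ∏ k, max (x k - ((j k : ℕ) : ℝ)/(a k)) 0 = 0 := by
            apply Finset.prod_eq_zero (Finset.mem_univ k₀)
            apply max_eq_right
            have hle : (((i k₀ : ℕ) : ℝ)+1)/(a k₀) ≤ ((j k₀ : ℕ) : ℝ)/(a k₀) := by
              apply (div_le_div_iff_of_pos_right (hapos k₀)).mpr
              exact_mod_cast Nat.succ_le_of_lt hk₀
            have := (hx' k₀).2
            linarith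
          rw [hzero, mul_zero]
      rw [hSB, setIntegral_congr_fun (MeasurableSet.univ_pi fun k => measurableSet_Icc) hpoly]
      have hma := multiaffine m
        (fun j => if ∀ k, (j k : ℕ) ≤ (i k : ℕ) then γ j else 0)
        (fun j k => ((j k : ℕ) : ℝ)/(a k))
        (fun k => ((i k : ℕ) : ℝ)/(a k))
        (fun k => (((i k : ℕ) : ℝ)+1)/(a k))
        (fun k => (div_le_div_iff_of_pos_right (hapos k)).mpr (by linarith))
      refine le_trans (le_of_eq ?_) hma
      have hα : (∏ k, (((((i k : ℕ) : ℝ)+1)/(a k)) - (((i k : ℕ) : ℝ)/(a k)))/4)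
          = (1/4:ℝ)^m * (∏ k, (a k : ℝ))⁻¹ := by
        rw [show ((1/4:ℝ)^m * (∏ k, (a k : ℝ))⁻¹)
            = ∏ k : Fin m, ((1/4:ℝ) * ((a k : ℝ))⁻¹) by
          rw [Finset.prod_mul_distrib, Finset.prod_const, Finset.card_univ,
            Fintype.card_fin, Finset.prod_inv_distrib]]
        refine Finset.prod_congr rfl fun k _ => ?_
        rw [div_sub_div_same, add_sub_cancel_left]
        ring
      have hv : (∑ j, (if ∀ k, (j k : ℕ) ≤ (i k : ℕ) then γ j else 0) *
            ∏ k, ((((i k : ℕ) : ℝ)+1)/(a k) - ((j k : ℕ) : ℝ)/(a k)))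
          = Lsq m a γ i / (∏ k, (a k : ℝ)) := by
        rw [Lsq, Finset.sum_div]
        refine Finset.sum_congr rfl fun j _ => ?_
        by_cases hji : ∀ k, (j k : ℕ) ≤ (i k : ℕ)
        · rw [if_pos hji, if_pos hji]
          have hfac : ∀ k, (((i k : ℕ) : ℝ)+1)/(a k) - ((j k : ℕ) : ℝ)/(a k)
              = (((i k : ℕ) : ℝ) - ((j k : ℕ) : ℝ) + 1)/(a k) := by
            intro k; rw [div_sub_div_same]; ring_nf
          rw [Finset.prod_congr rfl fun k _ => hfac k, Finset.prod_div_distrib]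
          ring
        · rw [if_neg hji, if_neg hji, zero_mul, zero_mul, zero_div]
      rw [hα, hv, div_pow]
      ring
    calc (1/4:ℝ)^m * (((∏ k, (a k : ℝ))^3)⁻¹ * (∑ i, (Lsq m a γ i)^2))
        = ∑ i, (1/4:ℝ)^m * (((∏ k, (a k : ℝ))^3)⁻¹ * (Lsq m a γ i)^2) := by
          rw [Finset.mul_sum, Finset.mul_sum]
      _ ≤ ∑ i, ∫ x in S i, (Gfun m a γ x)^2 := Finset.sum_le_sum fun i _ => hbox i
  -- sqrt juggling
  refine le_trans (le_of_eq ?_) (Real.sqrt_le_sqrt key)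
  rw [Real.sqrt_mul (by positivity : (0:ℝ) ≤ (1/4:ℝ)^m),
    Real.sqrt_mul (by positivity : (0:ℝ) ≤ ((∏ k, (a k : ℝ))^3)⁻¹)]
  have hsq1 : Real.sqrt ((1/4:ℝ)^m) = (1/2:ℝ)^m := by
    rw [show ((1/4:ℝ))^m = ((1/2:ℝ)^m)^2 by rw [sq, ← mul_pow]; norm_num]
    exact Real.sqrt_sq (by positivity)
  have hsq2 : Real.sqrt (((∏ k, (a k : ℝ))^3)⁻¹) = (∏ k, (a k : ℝ)) ^ (-(3:ℝ)/2) := by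
    rw [Real.sqrt_inv, show (∏ k, (a k : ℝ))^3 = (∏ k, (a k : ℝ))^((3:ℕ):ℝ) from
      (Real.rpow_natCast _ 3).symm, Real.sqrt_eq_rpow, ← Real.rpow_mul hA.le,
      ← Real.rpow_neg hA.le]
    norm_num
  rw [hsq1, hsq2]
  ring
end
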